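/- arXiv:2208.03996 — 4 statements merged into one kernel-verified Lean document; each statement's English description precedes it below -/
import Mathlib

section
/- For every integer n ≥ 1: ∑_{r=0}^{n} C(n,r)·r·N_bi(r,n-r,0) = n^{n-1}. -/
open Finset

/-- Number of simple connected bipartite graphs on the labeled vertex set
`Fin r ⊕ Fin s`, with all edges joining the two parts and exactly
`r + s - 1 + k` edges (so `k` is the Betti number). -/
noncomputable def Nbi (r s k : ℕ) : ℕ :=
  Nat.card {G : SimpleGraph (Fin r ⊕ Fin s) //
    G.Connected ∧
    (∀ a b, ¬ G.Adj (Sum.inl a) (Sum.inl b)) ∧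
    (∀ a b, ¬ G.Adj (Sum.inr a) (Sum.inr b)) ∧
    Nat.card G.edgeSet = r + s - 1 + k}


lemma binom1 (m x : ℕ) : ∑ i ∈ range (m+1), m.choose i * x^(m-i) = (x+1)^m := by
  rw [add_pow]
  rw [← Finset.sum_range_reflect]
  refine Finset.sum_congr rfl fun j hj => ?_
  rw [mem_range, Nat.lt_succ_iff] at hj
  have h1 : m + 1 - 1 - j = m - j := by omega
  have h2 : m - (m - j) = j := by omega
  rw [h1, h2, Nat.choose_symm hj, one_pow, mul_one, mul_comm, Nat.cast_id]

lemma binom2 (m x : ℕ) : ∑ i ∈ range (m+1), i * m.choose i * x^(m-i) = m * (x+1)^(m-1) := by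
  cases m with
  | zero => simp
  | succ m' =>
    rw [Finset.sum_range_succ']
    simp only [Nat.zero_mul, Nat.mul_zero, zero_mul, add_zero]
    have : ∀ i, (i+1) * (m'+1).choose (i+1) * x^(m'+1-(i+1)) = (m'+1) * (m'.choose i * x^(m'-i)) := by
      intro i
      have := Nat.add_one_mul_choose_eq m' i
      have h : (i+1) * (m'+1).choose (i+1) = (m'+1) * m'.choose i := by
        rw [mul_comm, this]
      rw [Nat.add_sub_add_right, h]; ring
    rw [Finset.sum_congr rfl fun i _ => this i, ← Finset.mul_sum, binom1]
    simp

/-- rooted forest condition: roots `S` fixed, everything eventually reaches `S`. -/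
def RF {V : Type} (p : V → V) (S : Finset V) : Prop :=
  (∀ s ∈ S, p s = s) ∧ ∀ v, ∃ k, p^[k] v ∈ S

section Fiber

variable {V : Type} [Fintype V] [DecidableEq V]

def childSet (p : V → V) (S : Finset V) (s₀ : V) : Finset V :=
  (univ \ S).filter (fun v => p v = s₀)

def fwd (s₀ : V) (p : V → V) (v : {x : V // x ≠ s₀}) : {x : V // x ≠ s₀} :=
  if h : p ↑v = s₀ then v else ⟨p ↑v, h⟩

def bwd (s₀ : V) (C : Finset V) (p' : {x : V // x ≠ s₀} → {x : V // x ≠ s₀}) (v : V) : V :=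
  if h : v = s₀ then s₀ else if v ∈ C then s₀ else ↑(p' ⟨v, h⟩)

def Tsub (S : Finset V) (s₀ : V) (C : Finset V) : Finset {x : V // x ≠ s₀} :=
  (S.erase s₀ ∪ C).subtype (· ≠ s₀)

lemma mem_Tsub {S : Finset V} {s₀ : V} {C : Finset V} (hCS : Disjoint C S) (hs₀C : s₀ ∉ C)
    {v : {x : V // x ≠ s₀}} : v ∈ Tsub S s₀ C ↔ (↑v ∈ S ∨ ↑v ∈ C) := by
  simp only [Tsub, Finset.mem_subtype, Finset.mem_union, Finset.mem_erase]
  constructor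
  · rintro (⟨-, h⟩ | h) <;> tauto
  · rintro (h | h)
    · exact Or.inl ⟨v.2, h⟩
    · exact Or.inr h

lemma card_Tsub {S : Finset V} {s₀ : V} {C : Finset V} (hs₀ : s₀ ∈ S) (hCS : Disjoint C S) :
    (Tsub S s₀ C).card = S.card - 1 + C.card := by
  have hs₀C : s₀ ∉ C := fun h => (Finset.disjoint_left.mp hCS h) hs₀
  have h1 : (S.erase s₀ ∪ C).filter (· ≠ s₀) = S.erase s₀ ∪ C := by
    apply Finset.filter_true_of_mem
    intro x hx
    rcases Finset.mem_union.mp hx with h | h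
    · exact (Finset.mem_erase.mp h).1
    · exact fun he => hs₀C (he ▸ h)
  rw [Tsub, Finset.card_subtype, h1, Finset.card_union_of_disjoint, Finset.card_erase_of_mem hs₀]
  exact Finset.disjoint_left.mpr fun a ha hc =>
    (Finset.disjoint_left.mp hCS hc) (Finset.mem_of_mem_erase ha)

variable {S : Finset V} {s₀ : V} {C : Finset V}

lemma fwd_spec (hs₀ : s₀ ∈ S) (hCS : Disjoint C S) {p : V → V}
    (hp : RF p S) (hc : childSet p S s₀ = C) : RF (fwd s₀ p) (Tsub S s₀ C) := by
  have hs₀C : s₀ ∉ C := fun h => (Finset.disjoint_left.mp hCS h) hs₀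
  constructor
  · intro v hv
    rcases (mem_Tsub hCS hs₀C).mp hv with h | h
    · have : p ↑v = ↑v := hp.1 _ h
      rw [fwd]
      split
      · rfl
      · exact Subtype.ext this
    · have : p ↑v = s₀ := by
        rw [← hc] at h
        exact (Finset.mem_filter.mp h).2
      rw [fwd, dif_pos this]
  · have key : ∀ k (v : {x : V // x ≠ s₀}), p^[k] ↑v ∈ S → ∃ j, (fwd s₀ p)^[j] v ∈ Tsub S s₀ C := by
      intro k
      induction k with
      | zero =>
        intro v hv
        exact ⟨0, (mem_Tsub hCS hs₀C).mpr (Or.inl hv)⟩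
      | succ k ih =>
        intro v hv
        by_cases h1 : ↑v ∈ S
        · exact ⟨0, (mem_Tsub hCS hs₀C).mpr (Or.inl h1)⟩
        by_cases h2 : p ↑v = s₀
        · refine ⟨0, (mem_Tsub hCS hs₀C).mpr (Or.inr ?_)⟩
          rw [← hc, childSet, Finset.mem_filter, Finset.mem_sdiff]
          exact ⟨⟨Finset.mem_univ _, h1⟩, h2⟩
        · have hfwd : fwd s₀ p v = ⟨p ↑v, h2⟩ := dif_neg h2
          rw [Function.iterate_succ_apply] at hv
          obtain ⟨j, hj⟩ := ih ⟨p ↑v, h2⟩ hv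
          refine ⟨j + 1, ?_⟩
          rw [Function.iterate_succ_apply, hfwd]
          exact hj
    intro v
    obtain ⟨k, hk⟩ := hp.2 ↑v
    exact key k v hk

lemma bwd_spec (hs₀ : s₀ ∈ S) (hCS : Disjoint C S)
    {p' : {x : V // x ≠ s₀} → {x : V // x ≠ s₀}} (hp' : RF p' (Tsub S s₀ C)) :
    RF (bwd s₀ C p') S ∧ childSet (bwd s₀ C p') S s₀ = C := by
  have hs₀C : s₀ ∉ C := fun h => (Finset.disjoint_left.mp hCS h) hs₀
  have hroot : ∀ s ∈ S, bwd s₀ C p' s = s := by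
    intro s hs
    by_cases h : s = s₀
    · rw [bwd, dif_pos h, h]
    · have hsC : s ∉ C := fun hc => (Finset.disjoint_left.mp hCS hc) hs
      rw [bwd, dif_neg h, if_neg hsC]
      have : p' ⟨s, h⟩ = ⟨s, h⟩ := hp'.1 _ ((mem_Tsub hCS hs₀C).mpr (Or.inl hs))
      rw [this]
  refine ⟨⟨hroot, ?_⟩, ?_⟩
  · have key : ∀ k (v : {x : V // x ≠ s₀}), p'^[k] v ∈ Tsub S s₀ C →
        ∃ j, (bwd s₀ C p')^[j] ↑v ∈ S := by
      intro k
      induction k with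
      | zero =>
        intro v hv
        simp only [Function.iterate_zero_apply] at hv
        rcases (mem_Tsub hCS hs₀C).mp hv with h | h
        · exact ⟨0, h⟩
        · refine ⟨1, ?_⟩
          have : bwd s₀ C p' ↑v = s₀ := by rw [bwd, dif_neg v.2, if_pos h]
          simpa [this] using hs₀
      | succ k ih =>
        intro v hv
        by_cases h1 : ↑v ∈ C
        · refine ⟨1, ?_⟩
          have : bwd s₀ C p' ↑v = s₀ := by rw [bwd, dif_neg v.2, if_pos h1]
          simpa [this] using hs₀
        · have hbwd : bwd s₀ C p' ↑v = ↑(p' v) := by rw [bwd, dif_neg v.2, if_neg h1]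
          rw [Function.iterate_succ_apply] at hv
          obtain ⟨j, hj⟩ := ih (p' v) hv
          refine ⟨j + 1, ?_⟩
          rw [Function.iterate_succ_apply, hbwd]
          exact hj
    intro v
    by_cases h : v = s₀
    · exact ⟨0, by simpa [h] using hs₀⟩
    · obtain ⟨k, hk⟩ := hp'.2 ⟨v, h⟩
      exact key k ⟨v, h⟩ hk
  · ext v
    rw [childSet, Finset.mem_filter, Finset.mem_sdiff]
    constructor
    · rintro ⟨⟨-, hvS⟩, hv⟩
      by_contra hvC
      have h : v ≠ s₀ := fun he => hvS (he ▸ hs₀)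
      rw [bwd, dif_neg h, if_neg hvC] at hv
      exact (p' ⟨v, h⟩).2 hv
    · intro hvC
      have hvS : v ∉ S := fun hs => (Finset.disjoint_left.mp hCS hvC) hs
      have h : v ≠ s₀ := fun he => hs₀C (he ▸ hvC)
      refine ⟨⟨Finset.mem_univ _, hvS⟩, ?_⟩
      rw [bwd, dif_neg h, if_pos hvC]

noncomputable def fiberEquiv (hs₀ : s₀ ∈ S) (hCS : Disjoint C S) :
    {p : V → V // RF p S ∧ childSet p S s₀ = C} ≃
      {p' : {x : V // x ≠ s₀} → {x : V // x ≠ s₀} // RF p' (Tsub S s₀ C)} where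
  toFun p := ⟨fwd s₀ ↑p, fwd_spec hs₀ hCS p.2.1 p.2.2⟩
  invFun p' := ⟨bwd s₀ C ↑p', bwd_spec hs₀ hCS p'.2⟩
  left_inv := by
    rintro ⟨p, hp, hc⟩
    apply Subtype.ext
    funext v
    show bwd s₀ C (fwd s₀ p) v = p v
    by_cases h : v = s₀
    · rw [bwd, dif_pos h, h, hp.1 s₀ hs₀]
    by_cases h1 : v ∈ C
    · rw [bwd, dif_neg h, if_pos h1]
      rw [← hc] at h1
      exact ((Finset.mem_filter.mp h1).2).symm
    · rw [bwd, dif_neg h, if_neg h1]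
      have h2 : p v ≠ s₀ := by
        intro hps
        by_cases hvS : v ∈ S
        · exact h ((hp.1 v hvS) ▸ hps)
        · apply h1
          rw [← hc, childSet, Finset.mem_filter, Finset.mem_sdiff]
          exact ⟨⟨Finset.mem_univ _, hvS⟩, hps⟩
      show ↑(fwd s₀ p ⟨v, h⟩) = p v
      rw [fwd, dif_neg h2]
  right_inv := by
    rintro ⟨p', hp'⟩
    have hs₀C : s₀ ∉ C := fun h => (Finset.disjoint_left.mp hCS h) hs₀
    apply Subtype.ext
    funext v
    show fwd s₀ (bwd s₀ C p') v = p' v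
    by_cases h1 : ↑v ∈ C
    · have hb : bwd s₀ C p' ↑v = s₀ := by rw [bwd, dif_neg v.2, if_pos h1]
      have hpv : p' v = v := hp'.1 _ ((mem_Tsub hCS hs₀C).mpr (Or.inr h1))
      rw [fwd, dif_pos hb, hpv]
    · have hb : bwd s₀ C p' ↑v = ↑(p' v) := by rw [bwd, dif_neg v.2, if_neg h1]
      have h2 : bwd s₀ C p' ↑v ≠ s₀ := by rw [hb]; exact (p' v).2
      rw [fwd, dif_neg h2]
      apply Subtype.ext
      simpa using hb

end Fiber

lemma RF_empty_card {V : Type} [Nonempty V] :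
    Nat.card {p : V → V // RF p (∅ : Finset V)} = 0 := by
  have : IsEmpty {p : V → V // RF p (∅ : Finset V)} := by
    refine ⟨fun p => ?_⟩
    obtain ⟨k, hk⟩ := p.2.2 (Classical.arbitrary V)
    exact absurd hk (Finset.notMem_empty _)
  exact Nat.card_of_isEmpty

lemma RF_univ_card {V : Type} [Fintype V] [Nonempty V] :
    Nat.card {p : V → V // RF p (univ : Finset V)} = 1 := by
  rw [Nat.card_eq_one_iff_unique]
  constructor
  · refine ⟨fun p q => ?_⟩
    apply Subtype.ext
    funext v
    rw [p.2.1 v (Finset.mem_univ v), q.2.1 v (Finset.mem_univ v)]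
  · exact ⟨id, fun s _ => rfl, fun v => ⟨0, Finset.mem_univ _⟩⟩

theorem g_closed : ∀ (n : ℕ) (V : Type) [Fintype V] [DecidableEq V] (S : Finset V),
    Fintype.card V = n → S.Nonempty →
    Nat.card {p : V → V // RF p S} * n = S.card * n ^ (n - S.card) := by
  intro n
  induction n with
  | zero =>
    intro V _ _ S hcard hS
    have : IsEmpty V := Fintype.card_eq_zero_iff.mp hcard
    obtain ⟨s, hs⟩ := hS
    exact this.elim s
  | succ n' ih =>
    intro V _ _ S hcard hS
    classical
    set n := n' + 1 with hn
    have hVne : Nonempty V := Fintype.card_pos_iff.mp (by omega)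
    by_cases hSu : S = univ
    · subst hSu
      rw [RF_univ_card, Finset.card_univ, hcard, Nat.sub_self, pow_zero, one_mul, mul_one]
    -- main case
    obtain ⟨s₀, hs₀⟩ := hS
    set k := S.card with hk
    have hk1 : 1 ≤ k := Finset.card_pos.mpr ⟨s₀, hs₀⟩
    have hkn : k < n := by
      rw [← hcard, ← Finset.card_univ]
      exact Finset.card_lt_card (Finset.ssubset_univ_iff.mpr hSu)
    set m := n - k with hm
    have hm1 : 1 ≤ m := by omega
    -- the subtype V'
    have hcardV' : Fintype.card {x : V // x ≠ s₀} = n' := by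
      rw [Fintype.card_subtype_compl, Fintype.card_subtype_eq, hcard]
      omega
    have hV'ne : Nonempty {x : V // x ≠ s₀} := Fintype.card_pos_iff.mp (by omega)
    -- step 1: Nat.card to Finset.card
    have step1 : Nat.card {p : V → V // RF p S} =
        (univ.filter (fun p : V → V => RF p S)).card := by
      rw [Nat.card_eq_fintype_card, Fintype.card_subtype]
    -- step 2: fiberwise
    have step2 : (univ.filter (fun p : V → V => RF p S)).card =
        ∑ C ∈ (univ \ S).powerset,
          (univ.filter (fun p : V → V => RF p S ∧ childSet p S s₀ = C)).card := by
      rw [Finset.card_eq_sum_card_fiberwise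
        (f := fun p : V → V => childSet p S s₀) (t := (univ \ S).powerset)
        (fun p _ => Finset.mem_powerset.mpr (Finset.filter_subset _ _))]
      exact Finset.sum_congr rfl fun C _ => by rw [Finset.filter_filter]
    -- step 3: per fiber value
    have step3 : ∀ C ∈ (univ \ S).powerset,
        (univ.filter (fun p : V → V => RF p S ∧ childSet p S s₀ = C)).card * n' =
          (k - 1 + C.card) * n' ^ (m - C.card) := by
      intro C hC
      rw [Finset.mem_powerset] at hC
      have hCS : Disjoint C S := by
        refine Finset.disjoint_left.mpr fun a ha hs => ?_
        exact (Finset.mem_sdiff.mp (hC ha)).2 hs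
      have hTcard : (Tsub S s₀ C).card = k - 1 + C.card := card_Tsub hs₀ hCS
      have hfil : (univ.filter (fun p : V → V => RF p S ∧ childSet p S s₀ = C)).card =
          Nat.card {p' : {x : V // x ≠ s₀} → {x : V // x ≠ s₀} // RF p' (Tsub S s₀ C)} := by
        rw [← Nat.card_congr (fiberEquiv hs₀ hCS), Nat.card_eq_fintype_card,
          Fintype.card_subtype]
      rw [hfil]
      rcases Finset.eq_empty_or_nonempty (Tsub S s₀ C) with hT | hT
      · have h0 : k - 1 + C.card = 0 := by rw [← hTcard, hT, Finset.card_empty]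
        rw [h0, zero_mul, hT, RF_empty_card, zero_mul]
      · have := ih {x : V // x ≠ s₀} (Tsub S s₀ C) hcardV' hT
        rw [hTcard] at this
        have hCcard : C.card ≤ m := by
          have h1 := Finset.card_le_card hC
          rw [Finset.card_sdiff_of_subset (Finset.subset_univ S), Finset.card_univ, hcard] at h1
          omega
        have hexp : n' - (k - 1 + C.card) = m - C.card := by omega
        rw [this, hexp]
    -- step 4
    have hx : (univ \ S).card = m := by
      rw [Finset.card_sdiff_of_subset (Finset.subset_univ S), Finset.card_univ, hcard]
    have step4 : (univ.filter (fun p : V → V => RF p S)).card * n' =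
        ∑ i ∈ range (m+1), m.choose i * ((k - 1 + i) * n' ^ (m - i)) := by
      rw [step2, Finset.sum_mul, Finset.sum_congr rfl step3,
        Finset.sum_powerset_apply_card (f := fun i => (k - 1 + i) * n' ^ (m - i)), hx]
      simp [smul_eq_mul]
    have step5 : ∑ i ∈ range (m+1), m.choose i * ((k - 1 + i) * n' ^ (m - i)) =
        (k-1) * n^m + m * n^(m-1) := by
      have hterm : ∀ i, m.choose i * ((k-1+i) * n'^(m-i)) =
          (k-1) * (m.choose i * n'^(m-i)) + i * m.choose i * n'^(m-i) := fun i => by ring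
      rw [Finset.sum_congr rfl (fun i _ => hterm i), Finset.sum_add_distrib,
        ← Finset.mul_sum, binom1, binom2, ← hn]
    have hEn : (univ.filter (fun p : V → V => RF p S)).card * n' =
        (k-1) * n^m + m * n^(m-1) := step4.trans step5
    rw [step1]
    apply Nat.eq_of_mul_eq_mul_right (show 0 < n' by omega)
    calc (univ.filter (fun p : V → V => RF p S)).card * n * n'
        = ((univ.filter (fun p : V → V => RF p S)).card * n') * n := by ring
      _ = ((k-1) * n^m + m * n^(m-1)) * n := by rw [hEn]
      _ = k * n^m * n' := by
          obtain ⟨k', hk'⟩ : ∃ k', k = k'+1 := ⟨k-1, by omega⟩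
          obtain ⟨m', hm'⟩ : ∃ m', m = m'+1 := ⟨m-1, by omega⟩
          have hnkm : n = (k'+1) + (m'+1) := by omega
          have hn'2 : n' = k' + m' + 1 := by omega
          rw [hk', hm']
          simp only [Nat.add_sub_cancel]
          rw [pow_succ, hn'2, hnkm]
          ring

section Graph

variable {V : Type} [Fintype V] [DecidableEq V]

noncomputable def rt (p : V → V) (ρ : V) (v : V) : ℕ := sInf {k | p^[k] v = ρ}

def pGraph (p : V → V) : SimpleGraph V := SimpleGraph.fromRel (fun a b => p a = b)

lemma pGraph_adj {p : V → V} {a b : V} :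
    (pGraph p).Adj a b ↔ a ≠ b ∧ (p a = b ∨ p b = a) := by
  simp [pGraph, SimpleGraph.fromRel_adj]

variable {p : V → V} {ρ : V}

lemma RF_root (hp : RF p {ρ}) : p ρ = ρ := hp.1 ρ (Finset.mem_singleton_self ρ)

lemma RF_reach (hp : RF p {ρ}) (v : V) : ∃ k, p^[k] v = ρ := by
  obtain ⟨k, hk⟩ := hp.2 v
  exact ⟨k, Finset.mem_singleton.mp hk⟩

lemma rt_spec (hp : RF p {ρ}) (v : V) : p^[rt p ρ v] v = ρ :=
  Nat.sInf_mem (RF_reach hp v)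

lemma rt_eq_zero_iff (hp : RF p {ρ}) {v : V} : rt p ρ v = 0 ↔ v = ρ := by
  constructor
  · intro h
    have := rt_spec hp v
    rwa [h, Function.iterate_zero_apply] at this
  · intro h
    apply Nat.eq_zero_of_le_zero
    apply Nat.sInf_le
    simp [h]

lemma rt_succ (hp : RF p {ρ}) {v : V} (hv : v ≠ ρ) : rt p ρ v = rt p ρ (p v) + 1 := by
  have hne : rt p ρ v ≠ 0 := fun h => hv ((rt_eq_zero_iff hp).mp h)
  apply le_antisymm
  · apply Nat.sInf_le
    show p^[rt p ρ (p v) + 1] v = ρ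
    rw [Function.iterate_succ_apply]
    exact rt_spec hp (p v)
  · have heq : rt p ρ v - 1 + 1 = rt p ρ v := by omega
    have h1 : p^[rt p ρ v - 1] (p v) = ρ := by
      have h2 := rt_spec hp v
      rw [← heq, Function.iterate_succ_apply] at h2
      exact h2
    have h4 : rt p ρ (p v) ≤ rt p ρ v - 1 := Nat.sInf_le h1
    omega

lemma pfix_iff (hp : RF p {ρ}) {v : V} : p v = v ↔ v = ρ := by
  constructor
  · intro h
    have hall : ∀ k, p^[k] v = v := by
      intro k
      induction k with
      | zero => rfl
      | succ k ihk => rw [Function.iterate_succ_apply, h, ihk]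
    have := rt_spec hp v
    rw [hall] at this
    exact this
  · intro h
    rw [h]
    exact RF_root hp

lemma adj_rt_le (hp : RF p {ρ}) {a b : V} (h : (pGraph p).Adj a b) :
    rt p ρ a ≤ rt p ρ b + 1 := by
  obtain ⟨hne, hab | hba⟩ := pGraph_adj.mp h
  · by_cases ha : a = ρ
    · simp [(rt_eq_zero_iff hp).mpr ha]
    · rw [rt_succ hp ha, hab]
  · have hb : b ≠ ρ := by
      intro hbe
      rw [hbe, RF_root hp] at hba
      exact hne (hba.symm.trans hbe.symm)
    rw [rt_succ hp hb, hba]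
    omega

lemma rt_le_length (hp : RF p {ρ}) {v : V} (w : (pGraph p).Walk v ρ) :
    rt p ρ v ≤ w.length := by
  suffices h : ∀ (a b : V) (w : (pGraph p).Walk a b), b = ρ → rt p ρ a ≤ w.length from
    h v ρ w rfl
  intro a b w
  induction w with
  | nil => rintro rfl; simp [(rt_eq_zero_iff hp).mpr rfl]
  | cons h q ih =>
    rintro rfl
    have h2 := adj_rt_le hp h
    have h3 := ih rfl
    simp only [SimpleGraph.Walk.length_cons]
    omega

lemma exists_walk_rt (hp : RF p {ρ}) (v : V) :
    ∃ w : (pGraph p).Walk v ρ, w.length = rt p ρ v := by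
  suffices h : ∀ N (v : V), rt p ρ v = N → ∃ w : (pGraph p).Walk v ρ, w.length = N by
    obtain ⟨w, hw⟩ := h (rt p ρ v) v rfl
    exact ⟨w, hw⟩
  intro N
  induction N with
  | zero =>
    intro v hv
    have := (rt_eq_zero_iff hp).mp hv
    subst this
    exact ⟨SimpleGraph.Walk.nil, rfl⟩
  | succ N ihN =>
    intro v hv
    have hvρ : v ≠ ρ := fun h => by simp [(rt_eq_zero_iff hp).mpr h] at hv
    have hstep : rt p ρ (p v) = N := by
      have := rt_succ hp hvρ
      omega
    have hadj : (pGraph p).Adj v (p v) := by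
      rw [pGraph_adj]
      exact ⟨fun h => hvρ ((pfix_iff hp).mp h.symm), Or.inl rfl⟩
    obtain ⟨w, hw⟩ := ihN (p v) hstep
    exact ⟨SimpleGraph.Walk.cons hadj w, by simp [hw]⟩

lemma pGraph_connected (hp : RF p {ρ}) : (pGraph p).Connected := by
  rw [SimpleGraph.connected_iff]
  refine ⟨fun u v => ?_, ⟨ρ⟩⟩
  obtain ⟨wu, -⟩ := exists_walk_rt hp u
  obtain ⟨wv, -⟩ := exists_walk_rt hp v
  exact ⟨wu.append wv.reverse⟩

lemma pGraph_edgecard (hp : RF p {ρ}) :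
    Nat.card (pGraph p).edgeSet = Fintype.card V - 1 := by
  have hbij : Function.Bijective (fun v : {x : V // x ≠ ρ} =>
      (⟨s(↑v, p ↑v), by
        rw [SimpleGraph.mem_edgeSet, pGraph_adj]
        exact ⟨fun h => v.2 ((pfix_iff hp).mp h.symm), Or.inl rfl⟩⟩ :
        (pGraph p).edgeSet)) := by
    constructor
    · rintro ⟨a, ha⟩ ⟨b, hb⟩ hab
      simp only [Subtype.mk.injEq, Sym2.eq_iff] at hab
      rcases hab with ⟨h1, -⟩ | ⟨h1, h2⟩
      · exact Subtype.ext h1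
      · exfalso
        have hra : rt p ρ a = rt p ρ (p a) + 1 := rt_succ hp ha
        have hrb : rt p ρ b = rt p ρ (p b) + 1 := rt_succ hp hb
        rw [h2] at hra
        rw [← h1] at hrb
        omega
    · rintro ⟨e, he⟩
      induction e with
      | h a b =>
        rw [SimpleGraph.mem_edgeSet, pGraph_adj] at he
        obtain ⟨hne, hab | hba⟩ := he
        · have ha : a ≠ ρ := by
            rintro rfl
            exact hne (by rw [← hab, RF_root hp])
          exact ⟨⟨a, ha⟩, by simp only [Subtype.mk.injEq]; rw [hab]⟩
        · have hb : b ≠ ρ := by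
            rintro rfl
            exact hne (by rw [← hba, RF_root hp])
          refine ⟨⟨b, hb⟩, ?_⟩
          simp only [Subtype.mk.injEq]
          rw [hba, Sym2.eq_swap]
  have := Nat.card_congr (Equiv.ofBijective _ hbij)
  rw [← this, Nat.card_eq_fintype_card, Fintype.card_subtype_compl,
    Fintype.card_subtype_eq]

lemma rt_eq_of_graph_eq {q : V → V} (hp : RF p {ρ}) (hq : RF q {ρ})
    (hG : pGraph p = pGraph q) : rt p ρ = rt q ρ := by
  funext v
  apply le_antisymm
  · obtain ⟨w, hw⟩ := exists_walk_rt hq v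
    have hsub : ∀ e ∈ w.edges, e ∈ (pGraph p).edgeSet := fun e he =>
      hG ▸ (SimpleGraph.Walk.edges_subset_edgeSet w he)
    have := rt_le_length hp (w.transfer (pGraph p) hsub)
    rwa [SimpleGraph.Walk.length_transfer, hw] at this
  · obtain ⟨w, hw⟩ := exists_walk_rt hp v
    have hsub : ∀ e ∈ w.edges, e ∈ (pGraph q).edgeSet := fun e he =>
      hG ▸ (SimpleGraph.Walk.edges_subset_edgeSet w he)
    have := rt_le_length hq (w.transfer (pGraph q) hsub)
    rwa [SimpleGraph.Walk.length_transfer, hw] at this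

lemma pGraph_inj {q : V → V} (hp : RF p {ρ}) (hq : RF q {ρ})
    (hG : pGraph p = pGraph q) : p = q := by
  have hrt := rt_eq_of_graph_eq hp hq hG
  funext v
  by_cases hv : v = ρ
  · rw [hv, RF_root hp, RF_root hq]
  · have hadjq : (pGraph q).Adj v (q v) := by
      rw [pGraph_adj]
      exact ⟨fun h => hv ((pfix_iff hq).mp h.symm), Or.inl rfl⟩
    have hadjp : (pGraph p).Adj v (q v) := hG ▸ hadjq
    obtain ⟨hne, h | h⟩ := pGraph_adj.mp hadjp
    · exact h
    · exfalso
      have hqv : q v ≠ ρ := by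
        rintro he
        rw [he, RF_root hp] at h
        exact hv h.symm
      have h1 : rt p ρ (q v) = rt p ρ v + 1 := by rw [rt_succ hp hqv, h]
      have h2 : rt q ρ v = rt q ρ (q v) + 1 := rt_succ hq hv
      rw [← hrt] at h2
      omega

end Graph

section Count

variable {V : Type} [Fintype V] [DecidableEq V]

noncomputable def Eset (p : V → V) (ρ : V) : Finset V :=
  univ.filter (fun v => Even (rt p ρ v))

lemma mem_Eset {p : V → V} {ρ v : V} : v ∈ Eset p ρ ↔ Even (rt p ρ v) := by
  simp [Eset]

lemma root_mem_Eset {p : V → V} {ρ : V} (hp : RF p {ρ}) : ρ ∈ Eset p ρ := by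
  rw [mem_Eset, (rt_eq_zero_iff hp).mpr rfl]
  exact Even.zero

lemma Eset_eq_iff {p : V → V} {ρ : V} {R : Finset V} (hp : RF p {ρ}) (hρ : ρ ∈ R) :
    Eset p ρ = R ↔ ∀ v, v ≠ ρ → (v ∈ R ↔ p v ∉ R) := by
  constructor
  · rintro rfl v hv
    rw [mem_Eset, mem_Eset, rt_succ hp hv, Nat.even_add_one]
  · intro hcross
    ext v
    rw [mem_Eset]
    suffices h : ∀ N (v : V), rt p ρ v = N → (Even (rt p ρ v) ↔ v ∈ R) from h _ v rfl
    intro N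
    induction N with
    | zero =>
      intro v hv
      have := (rt_eq_zero_iff hp).mp hv
      subst this
      simp [hv, hρ]
    | succ N ihN =>
      intro v hv
      have hvρ : v ≠ ρ := fun h => by simp [(rt_eq_zero_iff hp).mpr h] at hv
      have hstep : rt p ρ (p v) = N := by have := rt_succ hp hvρ; omega
      have h1 := ihN (p v) hstep
      rw [hv, Nat.even_add_one, ← hstep, h1]
      rw [hcross v hvρ]

lemma count_eq_graphcount (R : Finset V) (ρ : V) :
    Nat.card {p : V → V // RF p {ρ} ∧ ∀ v, v ≠ ρ → (v ∈ R ↔ p v ∉ R)} =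
      Nat.card {G : SimpleGraph V // G.Connected ∧
        (∀ u w, G.Adj u w → (u ∈ R ↔ w ∉ R)) ∧
        Nat.card G.edgeSet = Fintype.card V - 1} := by
  classical
  apply Nat.card_congr
  have hcrossG : ∀ (p : V → V), RF p {ρ} → (∀ v, v ≠ ρ → (v ∈ R ↔ p v ∉ R)) →
      ∀ u w, (pGraph p).Adj u w → (u ∈ R ↔ w ∉ R) := by
    intro p hp hcr u w huw
    obtain ⟨hne, h | h⟩ := pGraph_adj.mp huw
    · have hu : u ≠ ρ := by
        intro hue
        rw [hue, RF_root hp] at h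
        exact hne (hue.trans h)
      rw [← h]
      exact hcr u hu
    · have hw : w ≠ ρ := by
        intro hwe
        rw [hwe, RF_root hp] at h
        exact hne (h.symm.trans hwe.symm)
      have := hcr w hw
      rw [h] at this
      tauto
  refine Equiv.ofBijective (fun p => ⟨pGraph ↑p,
    pGraph_connected p.2.1, hcrossG ↑p p.2.1 p.2.2, pGraph_edgecard p.2.1⟩) ⟨?_, ?_⟩
  · rintro ⟨p, hp, hp2⟩ ⟨q, hq, hq2⟩ hEq
    simp only [Subtype.mk.injEq] at hEq ⊢
    exact pGraph_inj hp hq hEq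
  · rintro ⟨G, hconn, hcross, hcard⟩
    have hexists : ∀ v, v ≠ ρ → ∃ u, G.Adj v u ∧ G.dist u ρ + 1 = G.dist v ρ := by
      intro v hv
      obtain ⟨w, hw⟩ := (hconn v ρ).exists_walk_length_eq_dist
      cases w with
      | nil => exact absurd rfl hv
      | @cons _ u _ h q =>
        refine ⟨u, h, ?_⟩
        have h1 : G.dist u ρ ≤ q.length := SimpleGraph.dist_le q
        obtain ⟨w', hw'⟩ := (hconn u ρ).exists_walk_length_eq_dist
        have h2 : G.dist v ρ ≤ (SimpleGraph.Walk.cons h w').length := SimpleGraph.dist_le _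
        simp only [SimpleGraph.Walk.length_cons] at hw h2
        omega
    set p : V → V := fun v => if h : v = ρ then ρ else (hexists v h).choose with hpdef
    have hpρ : p ρ = ρ := by simp [hpdef]
    have hadj : ∀ v, v ≠ ρ → G.Adj v (p v) ∧ G.dist (p v) ρ + 1 = G.dist v ρ := by
      intro v h
      have : p v = (hexists v h).choose := by simp [hpdef, dif_neg h]
      rw [this]
      exact (hexists v h).choose_spec
    have hreach : ∀ v, ∃ k, p^[k] v = ρ := by
      suffices hh : ∀ N (v : V), G.dist v ρ = N → ∃ k, p^[k] v = ρ from
        fun v => hh _ v rfl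
      intro N
      induction N with
      | zero =>
        intro v hv
        have : v = ρ := by
          by_contra hne
          have := ((hconn v ρ).pos_dist_of_ne hne)
          omega
        exact ⟨0, this⟩
      | succ N ihN =>
        intro v hv
        have hvρ : v ≠ ρ := by
          rintro rfl
          rw [SimpleGraph.dist_self] at hv
          omega
        have := (hadj v hvρ).2
        obtain ⟨k, hk⟩ := ihN (p v) (by omega)
        exact ⟨k + 1, by rw [Function.iterate_succ_apply, hk]⟩
    have hp : RF p {ρ} := by
      constructor
      · intro s hs
        rw [Finset.mem_singleton] at hs
        rw [hs, hpρ]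
      · intro v
        obtain ⟨k, hk⟩ := hreach v
        exact ⟨k, Finset.mem_singleton.mpr hk⟩
    refine ⟨⟨p, hp, ?_⟩, ?_⟩
    · intro v hv
      exact hcross v (p v) (hadj v hv).1
    · simp only [Subtype.mk.injEq]
      have hle : pGraph p ≤ G := by
        intro a b hab
        obtain ⟨hne, h | h⟩ := pGraph_adj.mp hab
        · have ha : a ≠ ρ := by
            intro hae
            rw [hae, hpρ] at h
            exact hne (hae.trans h)
          exact h ▸ (hadj a ha).1
        · have hb : b ≠ ρ := by
            intro hbe
            rw [hbe, hpρ] at h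
            exact hne (h.symm.trans hbe.symm)
          exact (h ▸ (hadj b hb).1).symm
      have hsub : (pGraph p).edgeFinset ⊆ G.edgeFinset :=
        SimpleGraph.edgeFinset_mono hle
      have hc1 : (pGraph p).edgeFinset.card = Fintype.card V - 1 := by
        rw [SimpleGraph.edgeFinset, Set.toFinset_card, ← Nat.card_eq_fintype_card]
        exact pGraph_edgecard hp
      have hc2 : G.edgeFinset.card = Fintype.card V - 1 := by
        rw [SimpleGraph.edgeFinset, Set.toFinset_card, ← Nat.card_eq_fintype_card]
        exact hcard
      have := Finset.eq_of_subset_of_card_le hsub (by omega)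
      exact SimpleGraph.edgeFinset_inj.mp this

end Count

lemma graphcount_eq_Nbi {n : ℕ} (R : Finset (Fin n)) {r : ℕ} (hr : R.card = r) :
    Nat.card {G : SimpleGraph (Fin n) // G.Connected ∧
        (∀ u w, G.Adj u w → (u ∈ R ↔ w ∉ R)) ∧
        Nat.card G.edgeSet = Fintype.card (Fin n) - 1} = Nbi r (n - r) 0 := by
  classical
  have hrn : r ≤ n := hr ▸ (by simpa using Finset.card_le_card (Finset.subset_univ R))
  set s := n - r with hs
  have eR : Fin r ≃ {x : Fin n // x ∈ R} :=
    (Fintype.equivFinOfCardEq ((Fintype.card_coe R).trans hr)).symm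
  have eRc : Fin s ≃ {x : Fin n // x ∉ R} := by
    have h1 : Fintype.card {x : Fin n // x ∉ R} = s := by
      rw [Fintype.card_subtype_compl, Fintype.card_fin, Fintype.card_coe, hr]
    exact (Fintype.equivFinOfCardEq h1).symm
  set e : Fin r ⊕ Fin s ≃ Fin n :=
    (Equiv.sumCongr eR eRc).trans (Equiv.sumCompl (· ∈ R)) with he
  have he_inl' : ∀ a, e (Sum.inl a) = ↑(eR a) := fun a => rfl
  have he_inr' : ∀ b, e (Sum.inr b) = ↑(eRc b) := fun b => rfl
  have he_inl : ∀ a, (e (Sum.inl a) : Fin n) ∈ R := fun a => by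
    rw [he_inl']; exact (eR a).2
  have he_inr : ∀ b, (e (Sum.inr b) : Fin n) ∉ R := fun b => by
    rw [he_inr']; exact (eRc b).2
  have hsurj_inl : ∀ u : Fin n, u ∈ R → ∃ a, e (Sum.inl a) = u := by
    intro u hu
    refine ⟨eR.symm ⟨u, hu⟩, ?_⟩
    rw [he_inl', Equiv.apply_symm_apply]
  have hsurj_inr : ∀ u : Fin n, u ∉ R → ∃ b, e (Sum.inr b) = u := by
    intro u hu
    refine ⟨eRc.symm ⟨u, hu⟩, ?_⟩
    rw [he_inr', Equiv.apply_symm_apply]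
  rw [Nbi]
  apply Nat.card_congr
  refine Equiv.subtypeEquiv (Equiv.mk (fun G => G.comap e)
    (fun G' => G'.comap e.symm) (fun G => ?_) (fun G' => ?_)) (fun G => ?_)
  · ext a b; simp [SimpleGraph.comap]
  · ext a b; simp [SimpleGraph.comap]
  · simp only [Equiv.coe_fn_mk]
    have iso : G.comap e.toEmbedding ≃g G := SimpleGraph.Iso.comap e G
    have hiso : (G.comap ⇑e) = G.comap e.toEmbedding := rfl
    constructor
    · rintro ⟨hconn, hcross, hcard⟩
      refine ⟨?_, ?_, ?_, ?_⟩
      · rw [hiso, iso.connected_iff]; exact hconn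
      · intro a b hab
        rw [SimpleGraph.comap_adj] at hab
        have := hcross _ _ hab
        have h1 := he_inl a
        have h2 := he_inl b
        tauto
      · intro a b hab
        rw [SimpleGraph.comap_adj] at hab
        have := hcross _ _ hab
        have h1 := he_inr a
        have h2 := he_inr b
        tauto
      · rw [hiso, Nat.card_congr iso.mapEdgeSet, hcard, Fintype.card_fin]
        omega
    · rintro ⟨hconn, hinl, hinr, hcard⟩
      refine ⟨?_, ?_, ?_⟩
      · rw [hiso, iso.connected_iff] at hconn; exact hconn
      · intro u w huw
        by_cases hu : u ∈ R <;> by_cases hw : w ∈ R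
        · exfalso
          obtain ⟨a, ha⟩ := hsurj_inl u hu
          obtain ⟨b, hb⟩ := hsurj_inl w hw
          exact hinl a b (by rw [SimpleGraph.comap_adj, ha, hb]; exact huw)
        · tauto
        · tauto
        · exfalso
          obtain ⟨a, ha⟩ := hsurj_inr u hu
          obtain ⟨b, hb⟩ := hsurj_inr w hw
          exact hinr a b (by rw [SimpleGraph.comap_adj, ha, hb]; exact huw)
      · rw [hiso, Nat.card_congr iso.mapEdgeSet] at hcard
        rw [hcard, Fintype.card_fin]
        omega

/-- For every `n ≥ 1`: `∑_{r=0}^{n} C(n,r)·r·N_bi(r,n-r,0) = n^{n-1}`. -/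
theorem stmt12 (n : ℕ) (hn : 1 ≤ n) :
    ∑ r ∈ Finset.range (n + 1), n.choose r * r * Nbi r (n - r) 0 = n ^ (n - 1) := by
  classical
  set RTset : Finset ((Fin n) × (Fin n → Fin n)) :=
    univ.filter (fun x => RF x.2 {x.1}) with hRTset
  -- part (a): RTset.card = n^(n-1)
  have ha : RTset.card = n ^ (n - 1) := by
    have h1 : RTset.card = ∑ ρ ∈ (univ : Finset (Fin n)),
        (univ.filter (fun p : Fin n → Fin n => RF p {ρ})).card := by
      rw [hRTset, Finset.card_eq_sum_card_fiberwise (f := fun x => x.1) (t := univ)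
        (fun x _ => Finset.mem_univ _)]
      refine Finset.sum_congr rfl fun ρ _ => ?_
      rw [Finset.filter_filter]
      refine Finset.card_bij (fun x _ => x.2) ?_ ?_ ?_
      · intro x hx
        simp only [Finset.mem_filter, Finset.mem_univ, true_and] at hx ⊢
        rw [← hx.2]
        exact hx.1
      · intro x hx y hy hxy
        simp only [Finset.mem_filter] at hx hy
        exact Prod.ext (hx.2.2.trans hy.2.2.symm) hxy
      · intro p hp
        simp only [Finset.mem_filter, Finset.mem_univ, true_and] at hp
        exact ⟨(ρ, p), by simp [hp], rfl⟩
    have h2 : ∀ ρ : Fin n, (univ.filter (fun p : Fin n → Fin n => RF p {ρ})).card * n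
        = n ^ (n - 1) := by
      intro ρ
      have h3 := g_closed n (Fin n) ({ρ}) (Fintype.card_fin n) (Finset.singleton_nonempty ρ)
      rw [Nat.card_eq_fintype_card, Fintype.card_subtype, Finset.card_singleton, one_mul] at h3
      exact h3
    apply Nat.eq_of_mul_eq_mul_right (show 0 < n by omega)
    rw [h1, Finset.sum_mul, Finset.sum_congr rfl fun ρ _ => h2 ρ, Finset.sum_const,
      Finset.card_univ, Fintype.card_fin, smul_eq_mul]
    have : n ^ (n - 1) * n = n ^ n := by
      rw [← pow_succ]
      congr 1
      omega
    rw [this, ← this]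
    ring
  -- part (b): RTset.card equals the sum
  have hb : RTset.card = ∑ r ∈ Finset.range (n + 1), n.choose r * (r * Nbi r (n - r) 0) := by
    rw [Finset.card_eq_sum_card_fiberwise (f := fun x => Eset x.2 x.1)
      (t := (univ : Finset (Fin n)).powerset)
      (fun x _ => Finset.mem_powerset.mpr (Finset.subset_univ _))]
    have hfib : ∀ R ∈ (univ : Finset (Fin n)).powerset,
        (RTset.filter (fun x => Eset x.2 x.1 = R)).card
          = R.card * Nbi R.card (n - R.card) 0 := by
      intro R hR
      rw [Finset.card_eq_sum_card_fiberwise (f := fun x => x.1) (t := univ)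
        (fun x _ => Finset.mem_univ _)]
      have hfib2 : ∀ ρ ∈ (univ : Finset (Fin n)),
          ((RTset.filter (fun x => Eset x.2 x.1 = R)).filter (fun x => x.1 = ρ)).card
            = if ρ ∈ R then Nbi R.card (n - R.card) 0 else 0 := by
        intro ρ _
        by_cases hρ : ρ ∈ R
        · rw [if_pos hρ]
          have hcount : ((RTset.filter (fun x => Eset x.2 x.1 = R)).filter
              (fun x => x.1 = ρ)).card
              = (univ.filter (fun p : Fin n → Fin n => RF p {ρ} ∧ Eset p ρ = R)).card := by
            refine Finset.card_bij (fun x _ => x.2) ?_ ?_ ?_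
            · intro x hx
              simp only [hRTset, Finset.mem_filter, Finset.mem_univ, true_and] at hx ⊢
              obtain ⟨⟨h1, h2⟩, h3⟩ := hx
              rw [← h3]
              exact ⟨h1, h2⟩
            · intro x hx y hy hxy
              simp only [Finset.mem_filter] at hx hy
              exact Prod.ext (hx.2.trans hy.2.symm) hxy
            · intro p hp
              simp only [Finset.mem_filter, Finset.mem_univ, true_and] at hp
              exact ⟨(ρ, p), by simp [hRTset, hp.1, hp.2], rfl⟩
          rw [hcount, ← Fintype.card_subtype, ← Nat.card_eq_fintype_card]
          have hcongr : Nat.card {p : Fin n → Fin n // RF p {ρ} ∧ Eset p ρ = R}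
              = Nat.card {p : Fin n → Fin n // RF p {ρ} ∧
                  ∀ v, v ≠ ρ → (v ∈ R ↔ p v ∉ R)} := by
            apply Nat.card_congr
            exact Equiv.subtypeEquivRight fun p =>
              and_congr_right fun hp => Eset_eq_iff hp hρ
          rw [hcongr, count_eq_graphcount, graphcount_eq_Nbi R rfl]
        · rw [if_neg hρ, Finset.card_eq_zero, Finset.filter_eq_empty_iff]
          rintro x hx rfl
          simp only [hRTset, Finset.mem_filter, Finset.mem_univ, true_and] at hx
          exact hρ (hx.2 ▸ root_mem_Eset hx.1)
      rw [Finset.sum_congr rfl hfib2]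
      rw [Finset.sum_ite_mem, Finset.univ_inter, Finset.sum_const, smul_eq_mul]
    rw [Finset.sum_congr rfl hfib,
      Finset.sum_powerset_apply_card (f := fun m => m * Nbi m (n - m) 0)]
    simp only [Finset.card_univ, Fintype.card_fin, smul_eq_mul]
  rw [← ha, hb]
  exact Finset.sum_congr rfl fun r _ => mul_assoc _ _ _
end

section
/- Define w : ℕ → ℚ by w_0 = 0 and w_n = 2(n-1)n^{n-2} for n ≥ 1, and define the iterated convolutions w^{*1}_n = w_n and w^{*(k+1)}_n = ∑_{r=0}^{n} C(n,r)·w^{*k}_r·w_{n-r}. Then for all integers n ≥ 2 and all k with 1 ≤ k ≤ n/2: w^{*k}_n = 2k·(2k)!·n^{n-2k-1}·C(n,2k), where n^{n-2k-1} is interpreted in ℚ (so equal to 1/n when 2k = n). -/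
/-- `w_0 = 0` and `w_n = 2(n-1)n^{n-2}` for `n ≥ 1`. -/
noncomputable def wseq (n : ℕ) : ℚ :=
  if n = 0 then 0 else 2 * ((n : ℚ) - 1) * (n : ℚ) ^ (n - 2)

/-- Iterated binomial convolutions: `wconv 0 = w^{*1} = w` and
`wconv k = w^{*(k+1)}` with `w^{*(k+1)}_n = ∑_r C(n,r)·w^{*k}_r·w_{n-r}`. -/
noncomputable def wconv : ℕ → ℕ → ℚ
  | 0, n => wseq n
  | k + 1, n => ∑ r ∈ Finset.range (n + 1), (n.choose r : ℚ) * wconv k r * wseq (n - r)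

open Finset

noncomputable def U (x : ℚ) (m : ℕ) : ℚ := (x + m)^m - m * (x + m)^(m-1)

lemma U_zero (x : ℚ) : U x 0 = 1 := by simp [U]

lemma U_pos (x : ℚ) (m : ℕ) (h : 1 ≤ m) : U x m = x * (x + m)^(m-1) := by
  obtain ⟨j, rfl⟩ : ∃ j, m = j+1 := ⟨m-1, by omega⟩
  simp only [U, Nat.add_sub_cancel]
  rw [pow_succ]
  push_cast
  ring

lemma findiff : ∀ m d, d < m → ∀ x : ℚ,
    ∑ s ∈ range (m+1), (-1:ℚ)^s * (m.choose s) * (x+s)^d = 0 := by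
  intro m
  induction m with
  | zero => intro d hd; omega
  | succ m ih =>
    intro d hd x
    set f : ℕ → ℚ := fun s => (x+s)^d with hf
    have step1 : ∑ s ∈ range (m+2), (-1:ℚ)^s * ((m+1).choose s) * f s
        = ∑ s ∈ range (m+1), (-1:ℚ)^(s+1) * ((m+1).choose (s+1)) * f (s+1) + f 0 := by
      rw [Finset.sum_range_succ' (fun s => (-1:ℚ)^s * ((m+1).choose s) * f s) (m+1)]
      simp
    have hT : ∑ s ∈ range (m+1), (-1:ℚ)^(s+1) * (m.choose (s+1)) * f (s+1) + f 0
        = ∑ s ∈ range (m+1), (-1:ℚ)^s * (m.choose s) * f s := by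
      have h2 := Finset.sum_range_succ' (fun s => (-1:ℚ)^s * (m.choose s) * f s) (m+1)
      have h3 : ∑ s ∈ range (m+2), (-1:ℚ)^s * (m.choose s) * f s
          = ∑ s ∈ range (m+1), (-1:ℚ)^s * (m.choose s) * f s := by
        rw [Finset.sum_range_succ, Nat.choose_eq_zero_of_lt (by omega : m < m+1)]
        simp
      rw [h3] at h2
      simpa using h2.symm
    have key : ∑ s ∈ range (m+2), (-1:ℚ)^s * ((m+1).choose s) * f s
        = ∑ s ∈ range (m+1), (-1:ℚ)^s * (m.choose s) * (f s - f (s+1)) := by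
      rw [step1]
      have : ∀ s ∈ range (m+1), (-1:ℚ)^(s+1) * ((m+1).choose (s+1)) * f (s+1)
          = (-1:ℚ)^(s+1) * (m.choose s) * f (s+1) + (-1:ℚ)^(s+1) * (m.choose (s+1)) * f (s+1) := by
        intro s _
        rw [Nat.choose_succ_succ]
        push_cast
        ring
      rw [Finset.sum_congr rfl this, Finset.sum_add_distrib]
      rw [add_assoc, hT]
      rw [← Finset.sum_add_distrib]
      exact Finset.sum_congr rfl (fun s _ => by ring)
    rw [key]
    have expand : ∀ s : ℕ, f (s+1) - f s = ∑ i ∈ range d, (d.choose i : ℚ) * (x+s)^i := by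
      intro s
      have h4 : f (s+1) = ((x+s)+1)^d := by simp only [hf]; push_cast; ring_nf
      rw [h4, add_pow, Finset.sum_range_succ]
      simp only [one_pow, mul_one, Nat.choose_self, Nat.cast_one, Nat.sub_self, pow_zero, hf]
      rw [add_sub_assoc]
      simp only [sub_self, add_zero]
      exact Finset.sum_congr rfl (fun i _ => by ring)
    have swap : ∑ s ∈ range (m+1), (-1:ℚ)^s * (m.choose s) * (f s - f (s+1))
        = ∑ i ∈ range d, (-(d.choose i : ℚ)) * ∑ s ∈ range (m+1), (-1:ℚ)^s * (m.choose s) * (x+s)^i := by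
      have : ∀ s ∈ range (m+1), (-1:ℚ)^s * (m.choose s) * (f s - f (s+1))
          = ∑ i ∈ range d, (-(d.choose i : ℚ)) * ((-1:ℚ)^s * (m.choose s) * (x+s)^i) := by
        intro s _
        rw [show f s - f (s+1) = -(f (s+1) - f s) by ring, expand s]
        rw [← Finset.sum_neg_distrib, Finset.mul_sum]
        exact Finset.sum_congr rfl (fun i _ => by ring)
      rw [Finset.sum_congr rfl this, Finset.sum_comm]
      exact Finset.sum_congr rfl (fun i _ => by rw [Finset.mul_sum])
    rw [swap]
    have : ∀ i ∈ range d, (-(d.choose i : ℚ)) * ∑ s ∈ range (m+1), (-1:ℚ)^s * (m.choose s) * (x+s)^i = 0 := by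
      intro i hi
      rw [ih i (by simp at hi; omega) x, mul_zero]
    rw [Finset.sum_congr rfl this]
    simp

lemma tri (n : ℕ) (A : ℕ → ℕ → ℚ) :
    ∑ s ∈ range (n+1), ∑ t ∈ range (n+1-s), A s t
      = ∑ j ∈ range (n+1), ∑ s ∈ range (j+1), A s (j-s) := by
  exact (Finset.sum_range_diag_flip (n+1) A).symm

/-- key fact used repeatedly: `U x s * (x+s)^(j-s) = x * (x+s)^(j-1)` for `s ≤ j`, `1 ≤ j`. -/
lemma U_mul_pow (x : ℚ) (s j : ℕ) (hs : s ≤ j) (hj : 1 ≤ j) :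
    U x s * (x + s)^(j - s) = x * (x + s)^(j-1) := by
  rcases Nat.eq_zero_or_pos s with rfl | hs1
  · rw [U_zero, one_mul]
    rw [show j - 0 = (j - 1) + 1 by omega, pow_succ]
    push_cast; ring
  · rw [U_pos x s hs1, mul_assoc, ← pow_add]
    congr 2
    omega

/-- Abel's generalization of the binomial theorem. -/
lemma abelC (n : ℕ) (x y : ℚ) :
    ∑ s ∈ range (n+1), (n.choose s : ℚ) * U x s * (y + ((n-s : ℕ) : ℚ))^(n-s)
      = (x + y + n)^n := by
  set z : ℚ := x + y + n with hz
  set B : ℕ → ℕ → ℚ := fun s t =>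
    (n.choose s : ℚ) * U x s * ((-(x+s))^t * z^(n-s-t) * ((n-s).choose t : ℚ)) with hB
  have step1 : ∑ s ∈ range (n+1), (n.choose s : ℚ) * U x s * (y + ((n-s : ℕ) : ℚ))^(n-s)
      = ∑ s ∈ range (n+1), ∑ t ∈ range (n+1-s), B s t := by
    apply Finset.sum_congr rfl
    intro s hs
    rw [Finset.mem_range] at hs
    have hsn : s ≤ n := by omega
    have hcast : (y + ((n-s : ℕ) : ℚ)) = -(x+s) + z := by
      rw [hz]
      push_cast [hsn]
      ring
    rw [hcast, add_pow, Finset.mul_sum]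
    rw [show n + 1 - s = n - s + 1 by omega]
  rw [step1, tri n B]
  have inner0 : ∑ s ∈ range (0+1), B s (0-s) = z^n := by
    simp [hB, U_zero]
  have innerpos : ∀ j ∈ range (n+1), j ≠ 0 → ∑ s ∈ range (j+1), B s (j-s) = 0 := by
    intro j hj hj0
    rw [Finset.mem_range] at hj
    have hj1 : 1 ≤ j := by omega
    have hterm : ∀ s ∈ range (j+1), B s (j-s)
        = (z^(n-j) * (n.choose j : ℚ) * ((-1:ℚ)^j * x)) * ((-1:ℚ)^s * (j.choose s : ℚ) * (x+s)^(j-1)) := by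
      intro s hs
      rw [Finset.mem_range] at hs
      have hsj : s ≤ j := by omega
      have hchoose : (n.choose s : ℚ) * ((n-s).choose (j-s) : ℚ) = (n.choose j : ℚ) * (j.choose s : ℚ) := by
        have : n.choose j * j.choose s = n.choose s * (n-s).choose (j-s) := Nat.choose_mul hsj
        exact_mod_cast congrArg (fun m : ℕ => (m : ℚ)) this.symm
      have hsign : (-(x+s))^(j-s) = (-1:ℚ)^j * ((-1:ℚ)^s * (x+s)^(j-s)) := by
        rw [neg_pow]
        have : (-1:ℚ)^(j-s) = (-1:ℚ)^j * (-1:ℚ)^s := by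
          have h1 : (-1:ℚ)^(j-s) * (-1:ℚ)^s = (-1:ℚ)^j := by
            rw [← pow_add]; congr 1; omega
          have h2 : ((-1:ℚ)^s) * ((-1:ℚ)^s) = 1 := by
            rw [← pow_add, ← two_mul, pow_mul]; norm_num
          calc (-1:ℚ)^(j-s) = (-1:ℚ)^(j-s) * (((-1:ℚ)^s) * ((-1:ℚ)^s)) := by rw [h2, mul_one]
            _ = (-1:ℚ)^j * (-1:ℚ)^s := by rw [← mul_assoc, h1]
        rw [this]; ring
      have hexp : n - s - (j - s) = n - j := by omega
      rw [hB]
      simp only [hexp]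
      rw [hsign]
      have hU := U_mul_pow x s j hsj hj1
      calc (n.choose s : ℚ) * U x s * ((-1:ℚ)^j * ((-1:ℚ)^s * (x+s)^(j-s)) * z^(n-j) * ((n-s).choose (j-s) : ℚ))
          = ((n.choose s : ℚ) * ((n-s).choose (j-s) : ℚ)) * ((-1:ℚ)^j * (-1:ℚ)^s * z^(n-j)) * (U x s * (x+s)^(j-s)) := by ring
        _ = ((n.choose j : ℚ) * (j.choose s : ℚ)) * ((-1:ℚ)^j * (-1:ℚ)^s * z^(n-j)) * (x * (x+s)^(j-1)) := by rw [hchoose, hU]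
        _ = (z^(n-j) * (n.choose j : ℚ) * ((-1:ℚ)^j * x)) * ((-1:ℚ)^s * (j.choose s : ℚ) * (x+s)^(j-1)) := by ring
    rw [Finset.sum_congr rfl hterm, ← Finset.mul_sum]
    rw [findiff j (j-1) (by omega) x, mul_zero]
  rw [Finset.sum_eq_single_of_mem 0 (Finset.mem_range.2 (by omega)) innerpos]
  simpa using inner0

lemma abelAB (n : ℕ) (x y : ℚ) :
    ∑ s ∈ range (n+1), (n.choose s : ℚ) * U x s * U y (n-s) = U (x+y) n := by
  rcases n with _ | m
  · simp [U_zero]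
  · have split : ∀ s ∈ range (m+2), ((m+1).choose s : ℚ) * U x s * U y (m+1-s)
        = (((m+1).choose s : ℚ) * U x s * (y + ((m+1-s : ℕ) : ℚ))^(m+1-s))
          - (((m+1).choose s : ℚ) * U x s * ((m+1-s : ℕ) : ℚ) * (y + ((m+1-s : ℕ) : ℚ))^((m+1-s)-1)) := by
      intro s _
      have hU : U y (m+1-s) = (y + ((m+1-s : ℕ) : ℚ))^(m+1-s) - ((m+1-s : ℕ) : ℚ) * (y + ((m+1-s : ℕ) : ℚ))^((m+1-s)-1) := rfl
      rw [hU]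
      ring
    rw [show m+1+1 = m+2 by rfl] at *
    rw [Finset.sum_congr rfl split, Finset.sum_sub_distrib]
    have h1 : ∑ s ∈ range (m+2), ((m+1).choose s : ℚ) * U x s * (y + ((m+1-s : ℕ) : ℚ))^(m+1-s)
        = (x + y + ((m+1 : ℕ) : ℚ))^(m+1) := abelC (m+1) x y
    have h2 : ∑ s ∈ range (m+2), ((m+1).choose s : ℚ) * U x s * ((m+1-s : ℕ) : ℚ) * (y + ((m+1-s : ℕ) : ℚ))^((m+1-s)-1)
        = ((m : ℚ)+1) * (x + (y+1) + m)^m := by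
      rw [Finset.sum_range_succ]
      have hlast : ((m+1).choose (m+1) : ℚ) * U x (m+1) * ((m+1-(m+1) : ℕ) : ℚ) * (y + ((m+1-(m+1) : ℕ) : ℚ))^((m+1-(m+1))-1) = 0 := by
        simp
      rw [hlast, add_zero]
      have hterm : ∀ s ∈ range (m+1), ((m+1).choose s : ℚ) * U x s * ((m+1-s : ℕ) : ℚ) * (y + ((m+1-s : ℕ) : ℚ))^((m+1-s)-1)
          = ((m : ℚ)+1) * ((m.choose s : ℚ) * U x s * ((y+1) + ((m-s : ℕ) : ℚ))^(m-s)) := by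
        intro s hs
        rw [Finset.mem_range] at hs
        have hsm : s ≤ m := by omega
        have hch : ((m+1).choose s : ℚ) * ((m+1-s : ℕ) : ℚ) = ((m : ℚ)+1) * (m.choose s : ℚ) := by
          have h := congrArg (fun a : ℕ => (a : ℚ)) (Nat.choose_mul_succ_eq m s)
          push_cast at h
          push_cast
          linarith [h]
        have hcast : (y + ((m+1-s : ℕ) : ℚ)) = ((y+1) + ((m-s : ℕ) : ℚ)) := by
          push_cast [hsm, show s ≤ m+1 by omega]
          ring
        have hexp : (m+1-s)-1 = m-s := by omega
        rw [hcast, hexp]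
        calc ((m+1).choose s : ℚ) * U x s * ((m+1-s : ℕ) : ℚ) * ((y+1) + ((m-s : ℕ) : ℚ))^(m-s)
            = (((m+1).choose s : ℚ) * ((m+1-s : ℕ) : ℚ)) * (U x s * ((y+1) + ((m-s : ℕ) : ℚ))^(m-s)) := by ring
          _ = (((m : ℚ)+1) * (m.choose s : ℚ)) * (U x s * ((y+1) + ((m-s : ℕ) : ℚ))^(m-s)) := by rw [hch]
          _ = ((m : ℚ)+1) * ((m.choose s : ℚ) * U x s * ((y+1) + ((m-s : ℕ) : ℚ))^(m-s)) := by ring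
      rw [Finset.sum_congr rfl hterm, ← Finset.mul_sum, abelC m x (y+1)]
    rw [h1, h2, U]
    simp only [Nat.add_sub_cancel]
    push_cast
    ring

noncomputable def g (j n : ℕ) : ℚ := (n.choose j : ℚ) * (j.factorial : ℚ) * U (j : ℚ) (n - j)

lemma g_two (n : ℕ) : wseq n = g 2 n := by
  match n with
  | 0 => simp [wseq, g]
  | 1 => simp [wseq, g]
  | 2 =>
    rw [wseq, g]
    norm_num [U_zero]
  | (m+3) =>
    rw [wseq, g, if_neg (by omega), show m+3-2 = m+1 by omega,
      U_pos _ _ (by omega : 1 ≤ m+1), Nat.cast_choose_two]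
    push_cast
    rw [pow_succ]
    norm_num [Nat.factorial]
    ring

lemma coeff_id (i j s t : ℕ) :
    ((i+j+(s+t)).choose (i+s) : ℚ) * ((i+s).choose i : ℚ) * ((j+t).choose j : ℚ)
        * (i.factorial : ℚ) * (j.factorial : ℚ)
      = ((i+j+(s+t)).choose (i+j) : ℚ) * ((i+j).factorial : ℚ) * ((s+t).choose s : ℚ) := by
  rw [Nat.cast_choose ℚ (by omega : i+s ≤ i+j+(s+t)),
      Nat.cast_choose ℚ (by omega : i ≤ i+s),
      Nat.cast_choose ℚ (by omega : j ≤ j+t),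
      Nat.cast_choose ℚ (by omega : i+j ≤ i+j+(s+t)),
      Nat.cast_choose ℚ (by omega : s ≤ s+t),
      show i+j+(s+t) - (i+s) = j+t by omega,
      show i+s-i = s by omega, show j+t-j = t by omega,
      show i+j+(s+t) - (i+j) = s+t by omega,
      show s+t-s = t by omega]
  have hne : ∀ a : ℕ, ((a.factorial : ℚ)) ≠ 0 := fun a => Nat.cast_ne_zero.2 a.factorial_ne_zero
  field_simp

lemma g_conv (i j n : ℕ) (hi : 1 ≤ i) (hj : 1 ≤ j) :
    ∑ r ∈ range (n+1), (n.choose r : ℚ) * g i r * g j (n - r) = g (i+j) n := by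
  by_cases hn : n < i + j
  · have hzero : ∀ r ∈ range (n+1), (n.choose r : ℚ) * g i r * g j (n - r) = 0 := by
      intro r hr
      rw [Finset.mem_range] at hr
      by_cases hri : r < i
      · have : r.choose i = 0 := Nat.choose_eq_zero_of_lt hri
        rw [g, this]
        simp
      · have : (n-r).choose j = 0 := Nat.choose_eq_zero_of_lt (by omega)
        rw [g, g, this]
        simp
    rw [Finset.sum_eq_zero hzero, g, Nat.choose_eq_zero_of_lt hn]
    simp
  · obtain ⟨m, rfl⟩ : ∃ m, n = i + j + m := ⟨n - i - j, by omega⟩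
    set n := i + j + m with hn'
    have hsub : Finset.Ico i (i+m+1) ⊆ range (n+1) := by
      intro r hr
      rw [Finset.mem_Ico] at hr
      rw [Finset.mem_range]
      omega
    have hout : ∀ r ∈ range (n+1), r ∉ Finset.Ico i (i+m+1) →
        (n.choose r : ℚ) * g i r * g j (n - r) = 0 := by
      intro r hr hro
      rw [Finset.mem_range] at hr
      rw [Finset.mem_Ico] at hro
      by_cases hri : r < i
      · rw [g, Nat.choose_eq_zero_of_lt hri]; simp
      · have : (n-r).choose j = 0 := Nat.choose_eq_zero_of_lt (by omega)
        rw [g, g, this]; simp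
    rw [← Finset.sum_subset hsub hout, Finset.sum_Ico_eq_sum_range,
      show i+m+1-i = m+1 by omega]
    have hterm : ∀ s ∈ range (m+1),
        (n.choose (i+s) : ℚ) * g i (i+s) * g j (n - (i+s))
        = ((n.choose (i+j) : ℚ) * ((i+j).factorial : ℚ))
            * ((m.choose s : ℚ) * U (i : ℚ) s * U (j : ℚ) (m - s)) := by
      intro s hs
      rw [Finset.mem_range] at hs
      have h1 : n - (i+s) = j + (m-s) := by omega
      have h2 : i + s - i = s := by omega
      have h3 : j + (m-s) - j = m - s := by omega
      rw [g, g, h1, h2, h3]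
      obtain ⟨t, rfl⟩ : ∃ t, m = s + t := ⟨m-s, by omega⟩
      rw [show s+t-s = t by omega]
      have := coeff_id i j s t
      calc (n.choose (i+s) : ℚ) * (((i+s).choose i : ℚ) * (i.factorial : ℚ) * U (i:ℚ) s)
            * (((j+t).choose j : ℚ) * (j.factorial : ℚ) * U (j:ℚ) t)
          = ((n.choose (i+s) : ℚ) * ((i+s).choose i : ℚ) * ((j+t).choose j : ℚ)
              * (i.factorial : ℚ) * (j.factorial : ℚ)) * (U (i:ℚ) s * U (j:ℚ) t) := by ring
        _ = ((n.choose (i+j) : ℚ) * ((i+j).factorial : ℚ) * ((s+t).choose s : ℚ))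
              * (U (i:ℚ) s * U (j:ℚ) t) := by rw [hn', this]
        _ = ((n.choose (i+j) : ℚ) * ((i+j).factorial : ℚ))
              * (((s+t).choose s : ℚ) * U (i:ℚ) s * U (j:ℚ) t) := by ring
    rw [Finset.sum_congr rfl hterm, ← Finset.mul_sum, abelAB m (i : ℚ) (j : ℚ), g,
      show n - (i+j) = m by omega]
    push_cast
    ring

lemma wconv_eq (k n : ℕ) : wconv k n = g (2*(k+1)) n := by
  induction k generalizing n with
  | zero => rw [wconv, g_two]
  | succ k ih =>
    rw [wconv]
    have : ∀ r ∈ range (n+1), (n.choose r : ℚ) * wconv k r * wseq (n - r)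
        = (n.choose r : ℚ) * g (2*(k+1)) r * g 2 (n - r) := by
      intro r _
      rw [ih, g_two]
    rw [Finset.sum_congr rfl this, g_conv (2*(k+1)) 2 n (by omega) (by omega),
      show 2*(k+1)+2 = 2*(k+1+1) by omega]

/-- For `n ≥ 2` and `1 ≤ k ≤ n/2`:
`w^{*k}_n = 2k·(2k)!·n^{n-2k-1}·C(n,2k)`, the power `n^{n-2k-1}` being taken
in `ℚ` (so equal to `1/n` when `2k = n`). -/
theorem stmt13 (n k : ℕ) (hn : 2 ≤ n) (hk1 : 1 ≤ k) (hk2 : 2 * k ≤ n) :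
    wconv (k - 1) n =
      2 * (k : ℚ) * ((2 * k).factorial : ℚ) * (n : ℚ) ^ ((n : ℤ) - 2 * k - 1) *
        (n.choose (2 * k) : ℚ) := by
  have h0 : wconv (k-1) n = g (2*k) n := by
    rw [wconv_eq, show k-1+1 = k by omega]
  rw [h0, g]
  have hnne : (n : ℚ) ≠ 0 := by positivity
  by_cases hm : n - 2*k = 0
  · -- n = 2k
    have hn2k : n = 2*k := by omega
    rw [hm, U_zero, mul_one]
    rw [show (n:ℤ) - 2*k - 1 = -1 by omega]
    rw [zpow_neg, zpow_one]
    have hcast : (n : ℚ) = 2*(k:ℚ) := by rw [hn2k]; push_cast; ring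
    rw [← hcast]
    field_simp
  · set m := n - 2*k with hmdef
    have hm1 : 1 ≤ m := by omega
    rw [U_pos _ _ hm1]
    have hcast : ((2*k : ℕ) : ℚ) + (m : ℚ) = (n : ℚ) := by
      push_cast
      have : 2*k + m = n := by omega
      exact_mod_cast congrArg (fun a : ℕ => (a : ℚ)) this
    rw [hcast]
    rw [show (n:ℤ) - 2*k - 1 = ((m - 1 : ℕ) : ℤ) by omega, zpow_natCast]
    push_cast
    ring
end

section
/- Let Y(x) = ∑_{n≥1} n^{n-1} x^n/n! as a formal power series over ℚ. Then for all integers k ≥ 1 and n ≥ 1: n!·[x^n](Y^k) = k·(n-1)·(n-2)···(n-(k-1))·n^{n-k}, where the empty product (k=1) is 1 and n^{n-k} is interpreted in ℚ (the right-hand side being 0 whenever k > n since the product then contains a zero factor). -/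
/-- `Y(x) = ∑_{n≥1} n^{n-1} x^n/n!`, the EGF of labeled rooted trees. -/
noncomputable def Yt : PowerSeries ℚ :=
  PowerSeries.mk fun n => if n = 0 then 0 else (n : ℚ) ^ (n - 1) / n.factorial

open Polynomial Finset
open scoped fwdDiff


/-- iterated forward difference of a polynomial of low degree vanishes -/
lemma fwdDiff_iter_poly_eval (n : ℕ) (p : ℚ[X]) (hp : p.natDegree < n) :
    (fwdDiff (1:ℚ))^[n] (fun y => p.eval y) = fun _ => 0 := by
  induction n generalizing p with
  | zero => omega
  | succ n ih =>
    have hstep : fwdDiff (1:ℚ) (fun y => p.eval y)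
        = fun y => (p.comp (X + C 1) - p).eval y := by
      funext y
      simp [fwdDiff, eval_comp]
    rw [Function.iterate_succ_apply, hstep]
    by_cases h0 : p.natDegree = 0
    · have : p.comp (X + C 1) - p = 0 := by
        rw [eq_C_of_natDegree_eq_zero h0]; simp
      rw [this]
      simp only [eval_zero]
      have : (fwdDiff (1:ℚ))^[n] (fun _ => (0:ℚ)) = fun _ => 0 := by
        apply Function.iterate_fixed
        simp [fwdDiff]
      simpa using this
    · apply ih
      have hpne : p ≠ 0 := fun h => h0 (by simp [h])
      have hndeg : (p.comp (X + C 1)).natDegree = p.natDegree := by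
        rw [natDegree_comp, natDegree_X_add_C, mul_one]
      have hp0 : p.comp (X + C 1) ≠ 0 := fun h => h0 (by
        rw [← hndeg, h, natDegree_zero])
      have hdeg : (p.comp (X + C 1)).degree = p.degree := by
        rw [degree_eq_natDegree hp0, degree_eq_natDegree hpne, hndeg]
      have hlc : (p.comp (X + C 1)).leadingCoeff = p.leadingCoeff := by
        rw [leadingCoeff_comp (by rw [natDegree_X_add_C]; exact one_ne_zero),
          leadingCoeff_X_add_C, one_pow, mul_one]
      have hlt := degree_sub_lt hdeg hp0 hlc
      rw [hdeg] at hlt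
      have : (p.comp (X + C 1) - p).natDegree < p.natDegree := by
        by_cases hz : p.comp (X + C 1) - p = 0
        · rw [hz]; simpa [natDegree_pos_iff_degree_pos] using Nat.pos_of_ne_zero h0
        · exact natDegree_lt_natDegree hz hlt
      omega

lemma alt_sum_pow (n : ℕ) (hn : 1 ≤ n) (x : ℚ) :
    ∑ k ∈ range (n + 1), (-1 : ℚ) ^ (n - k) * (n.choose k) * (x + k) ^ (n - 1) = 0 := by
  have h := fwdDiff_iter_eq_sum_shift (1:ℚ) (fun y => Polynomial.eval y ((X : ℚ[X]) ^ (n-1))) n x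
  rw [fwdDiff_iter_poly_eval n (X ^ (n-1)) (by simpa using Nat.sub_lt_of_pos_le one_pos hn)] at h
  calc ∑ k ∈ range (n + 1), (-1 : ℚ) ^ (n - k) * (n.choose k) * (x + k) ^ (n - 1)
      = ∑ k ∈ range (n + 1), ((-1 : ℤ) ^ (n - k) * (n.choose k)) •
          (fun y => Polynomial.eval y ((X : ℚ[X]) ^ (n-1))) (x + k • (1:ℚ)) := by
        apply Finset.sum_congr rfl
        intro k _
        simp only [zsmul_eq_mul, Polynomial.eval_pow, Polynomial.eval_X]
        push_cast
        ring
    _ = (fun _ : ℚ => (0:ℚ)) x := h.symm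
    _ = 0 := rfl

/-- coefficient function: `t c n = c(c+n)^{n-1}`, with `t c 0 = 1`. -/
noncomputable def tf (c : ℚ) (n : ℕ) : ℚ := if n = 0 then 1 else c * (c + n) ^ (n - 1)

@[simp] lemma tf_zero (c : ℚ) : tf c 0 = 1 := rfl

lemma tf_pos (c : ℚ) (n : ℕ) (hn : 1 ≤ n) : tf c n = c * (c + n) ^ (n - 1) := by
  rw [tf, if_neg (by omega)]

lemma tf_key (x : ℚ) (n k : ℕ) (hn : 1 ≤ n) (hk : k ≤ n) :
    tf x k * (-(x + k)) ^ (n - k) = x * (-1) ^ (n - k) * (x + k) ^ (n - 1) := by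
  rcases Nat.eq_zero_or_pos k with rfl | hkpos
  · rw [tf_zero, one_mul, Nat.sub_zero, neg_pow, Nat.cast_zero, add_zero]
    have hx : x * x ^ (n - 1) = x ^ n := by
      rw [← pow_succ']
      congr 1
      omega
    linear_combination (-((-1:ℚ) ^ n)) * hx
  · rw [tf_pos x k hkpos, neg_pow]
    have h : (x + k) ^ (k - 1) * (x + k) ^ (n - k) = (x + k) ^ (n - 1) := by
      rw [← pow_add]
      congr 1
      omega
    calc x * (x + ↑k) ^ (k - 1) * ((-1) ^ (n - k) * (x + ↑k) ^ (n - k))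
        = x * (-1) ^ (n - k) * ((x + k) ^ (k - 1) * (x + k) ^ (n - k)) := by ring
      _ = x * (-1) ^ (n - k) * (x + k) ^ (n - 1) := by rw [h]

lemma abelPoly (n : ℕ) (x : ℚ) : ∀ s : ℚ,
    ∑ k ∈ range (n + 1), C ((n.choose k : ℚ) * tf x k) * (X + C ((n : ℚ) - k + s)) ^ (n - k)
      = (X + C (x + n + s)) ^ n := by
  induction n with
  | zero => intro s; simp
  | succ n ih =>
    intro s
    push_cast
    set L : ℚ[X] := ∑ k ∈ range (n + 1 + 1),
      C (((n+1).choose k : ℚ) * tf x k) * (X + C ((n + 1 : ℚ) - k + s)) ^ (n + 1 - k) with hL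
    set R : ℚ[X] := (X + C (x + (n + 1 : ℚ) + s)) ^ (n + 1) with hR
    have hder : derivative (L - R) = 0 := by
      have hdL : derivative L = C ((n : ℚ) + 1) * (X + C (x + n + (s + 1))) ^ n := by
        rw [hL, derivative_sum, ← ih (s + 1), Finset.mul_sum, Finset.sum_range_succ]
        simp only [Nat.sub_self, pow_zero, mul_one, derivative_C, add_zero]
        apply Finset.sum_congr rfl
        intro k hk
        rw [Finset.mem_range] at hk
        rw [derivative_C_mul, derivative_pow, derivative_add, derivative_X, derivative_C,
          add_zero, mul_one]
        have hchoose : (((n+1).choose k : ℚ)) * ((n + 1 - k : ℕ) : ℚ)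
            = ((n : ℚ) + 1) * (n.choose k : ℚ) := by
          rw [← Nat.cast_mul, ← Nat.choose_mul_succ_eq]
          push_cast
          ring
        have hexp : n + 1 - k - 1 = n - k := by omega
        have hconst : (n + 1 : ℚ) - k + s = (n : ℚ) - k + (s + 1) := by ring
        rw [hexp, hconst, ← mul_assoc, ← C_mul, ← mul_assoc, ← C_mul]
        congr 2
        linear_combination tf x k * hchoose
      have hdR : derivative R = C ((n : ℚ) + 1) * (X + C (x + n + (s + 1))) ^ n := by
        rw [hR, derivative_pow, derivative_add, derivative_X, derivative_C, add_zero, mul_one]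
        congr 2
        · push_cast; ring
        · ring
      rw [derivative_sub, hdL, hdR, sub_self]
    have heval : (L - R).eval (-(x + (n + 1 : ℚ) + s)) = 0 := by
      have hevalR : R.eval (-(x + (n + 1 : ℚ) + s)) = 0 := by
        rw [hR, eval_pow, eval_add, eval_X, eval_C, neg_add_cancel, zero_pow (by omega)]
      have hevalL : L.eval (-(x + (n + 1 : ℚ) + s)) = 0 := by
        rw [hL, eval_finset_sum]
        have : ∀ k ∈ range (n + 1 + 1),
            (C (((n+1).choose k : ℚ) * tf x k) * (X + C ((n + 1 : ℚ) - k + s)) ^ (n + 1 - k)).eval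
              (-(x + (n + 1 : ℚ) + s))
            = x * ((-1) ^ (n + 1 - k) * ((n+1).choose k : ℚ) * (x + k) ^ n) := by
          intro k hk
          rw [Finset.mem_range] at hk
          rw [eval_mul, eval_C, eval_pow, eval_add, eval_X, eval_C]
          have harg : -(x + (n + 1 : ℚ) + s) + ((n + 1 : ℚ) - k + s) = -(x + k) := by ring
          rw [harg, mul_assoc, tf_key x (n+1) k (by omega) (by omega)]
          have : (n + 1 : ℕ) - 1 = n := by omega
          rw [this]
          ring
        rw [Finset.sum_congr rfl this, ← Finset.mul_sum]
        have h0 := alt_sum_pow (n + 1) (by omega) x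
        have : (n + 1 : ℕ) - 1 = n := by omega
        rw [this] at h0
        rw [h0, mul_zero]
      rw [eval_sub, hevalL, hevalR, sub_self]
    have hC := eq_C_of_derivative_eq_zero hder
    have hc0 : (L - R).coeff 0 = 0 := by
      have := heval
      rw [hC, eval_C] at this
      exact this
    have : L - R = 0 := by rw [hC, hc0, map_zero]
    exact sub_eq_zero.mp this

lemma abelA (n : ℕ) (x y : ℚ) :
    ∑ k ∈ range (n + 1), (n.choose k : ℚ) * tf x k * (y + ((n : ℚ) - k)) ^ (n - k)
      = (y + (x + n)) ^ n := by
  have h := congrArg (Polynomial.eval y) (abelPoly n x 0)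
  rw [eval_finset_sum] at h
  simp only [eval_mul, eval_C, eval_pow, eval_add, eval_X, add_zero] at h
  exact h

lemma abelB (n : ℕ) (a b : ℚ) :
    ∑ k ∈ range (n + 1), (n.choose k : ℚ) * tf a k * tf b (n - k) = tf (a + b) n := by
  rcases Nat.eq_zero_or_pos n with rfl | hn
  · simp
  have hsplit : ∀ k ∈ range (n + 1),
      (n.choose k : ℚ) * tf a k * (b + ((n : ℚ) - k)) ^ (n - k)
        = (n.choose k : ℚ) * tf a k * tf b (n - k)
          + (n.choose k : ℚ) * tf a k * (((n - k : ℕ) : ℚ) * (b + ((n : ℚ) - k)) ^ (n - k - 1)) := by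
    intro k hk
    rw [Finset.mem_range] at hk
    rcases Nat.eq_or_lt_of_le (Nat.le_of_lt_succ hk) with heq | hlt
    · subst heq
      simp [tf]
    · have hm : 1 ≤ n - k := by omega
      have hcast : ((n : ℚ) - k) = ((n - k : ℕ) : ℚ) := by
        push_cast [Nat.cast_sub (by omega : k ≤ n)]; ring
      rw [tf_pos b (n - k) hm, hcast]
      have hpow : (b + ((n - k : ℕ) : ℚ)) ^ (n - k)
          = (b + ((n - k : ℕ) : ℚ)) * (b + ((n - k : ℕ) : ℚ)) ^ (n - k - 1) := by
        rw [← pow_succ']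
        congr 1
        omega
      rw [hpow]
      ring
  have hA := abelA n a b
  rw [Finset.sum_congr rfl hsplit, Finset.sum_add_distrib] at hA
  have hsecond : ∑ k ∈ range (n + 1),
      (n.choose k : ℚ) * tf a k * (((n - k : ℕ) : ℚ) * (b + ((n : ℚ) - k)) ^ (n - k - 1))
        = (n : ℚ) * (a + b + n) ^ (n - 1) := by
    rw [Finset.sum_range_succ]
    simp only [Nat.sub_self, Nat.cast_zero, zero_mul, mul_zero, add_zero]
    have hterm : ∀ k ∈ range n,
        (n.choose k : ℚ) * tf a k * (((n - k : ℕ) : ℚ) * (b + ((n : ℚ) - k)) ^ (n - k - 1))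
          = (n : ℚ) * (((n-1).choose k : ℚ) * tf a k
              * ((b + 1) + (((n-1 : ℕ) : ℚ) - k)) ^ ((n-1) - k)) := by
      intro k hk
      rw [Finset.mem_range] at hk
      have hnat : (n-1).choose k * n = n.choose k * (n - k) := by
        have h := Nat.choose_mul_succ_eq (n - 1) k
        rwa [show n - 1 + 1 = n from by omega] at h
      have hch : (n.choose k : ℚ) * ((n - k : ℕ) : ℚ) = (n : ℚ) * ((n-1).choose k : ℚ) := by
        rw [← Nat.cast_mul, ← Nat.cast_mul, Nat.cast_inj, ← hnat, Nat.mul_comm]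
      have hbase : (b + 1) + (((n-1 : ℕ) : ℚ) - k) = b + ((n : ℚ) - k) := by
        push_cast [Nat.cast_sub (by omega : 1 ≤ n)]; ring
      rw [show (n-1) - k = n - k - 1 from by omega, hbase]
      linear_combination (tf a k * (b + ((n : ℚ) - k)) ^ (n - k - 1)) * hch
    rw [Finset.sum_congr rfl hterm, ← Finset.mul_sum]
    have hAA := abelA (n - 1) a (b + 1)
    rw [show n - 1 + 1 = n from by omega] at hAA
    rw [hAA]
    have hbase2 : (b + 1) + (a + ((n - 1 : ℕ) : ℚ)) = a + b + n := by
      push_cast [Nat.cast_sub (by omega : 1 ≤ n)]; ring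
    rw [hbase2]
  have hpow : (b + (a + (n : ℚ))) ^ n = (a + b + (n : ℚ)) * (a + b + n) ^ (n - 1) := by
    have h := pow_succ' (a + b + (n : ℚ)) (n - 1)
    rw [show n - 1 + 1 = n from by omega] at h
    rw [show b + (a + (n : ℚ)) = a + b + n from by ring, h]
  rw [tf_pos _ n hn]
  linear_combination hA - hsecond + hpow

open PowerSeries in
noncomputable def Ef (c : ℚ) : PowerSeries ℚ := PowerSeries.mk fun n => tf c n / n.factorial

lemma Ef_mul (a b : ℚ) : Ef a * Ef b = Ef (a + b) := by
  ext n
  rw [PowerSeries.coeff_mul, Finset.Nat.sum_antidiagonal_eq_sum_range_succ_mk]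
  simp only [Ef, PowerSeries.coeff_mk]
  have hterm : ∀ k ∈ range (n + 1), tf a k / k.factorial * (tf b (n - k) / (n - k).factorial)
      = ((n.choose k : ℚ) * tf a k * tf b (n - k)) / n.factorial := by
    intro k hk
    rw [Finset.mem_range] at hk
    rw [Nat.cast_choose ℚ (by omega : k ≤ n)]
    have h1 : (k.factorial : ℚ) ≠ 0 := by positivity
    have h2 : ((n - k).factorial : ℚ) ≠ 0 := by positivity
    have h3 : (n.factorial : ℚ) ≠ 0 := by positivity
    field_simp
  rw [Finset.sum_congr rfl hterm, ← Finset.sum_div, abelB n a b]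

lemma Ef_zero : Ef 0 = 1 := by
  ext n
  rw [Ef, PowerSeries.coeff_mk, PowerSeries.coeff_one]
  rcases Nat.eq_zero_or_pos n with rfl | hn
  · simp
  · rw [tf_pos 0 n hn, if_neg (by omega)]
    simp

lemma Ef_pow (k : ℕ) : Ef 1 ^ k = Ef k := by
  induction k with
  | zero => simpa using Ef_zero.symm
  | succ k ih =>
    rw [pow_succ, ih, Ef_mul]
    norm_num

lemma Yt_eq : Yt = PowerSeries.X * Ef 1 := by
  ext n
  rcases n with _ | n
  · rw [PowerSeries.coeff_zero_X_mul]
    simp [Yt]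
  · rw [PowerSeries.coeff_succ_X_mul, Yt, Ef, PowerSeries.coeff_mk, PowerSeries.coeff_mk,
      if_neg (Nat.succ_ne_zero n)]
    rcases Nat.eq_zero_or_pos n with rfl | hn
    · norm_num [tf]
    · rw [tf_pos 1 n hn]
      have h1 : ((n + 1 : ℕ) : ℚ) ^ (n + 1 - 1) = (1 + (n : ℚ)) * (1 + n) ^ (n - 1) := by
        have h := pow_succ' ((n : ℚ) + 1) (n - 1)
        rw [show n - 1 + 1 = n from by omega] at h
        rw [Nat.add_sub_cancel]
        push_cast
        rw [show ((n : ℚ) + 1) = (1 + (n:ℚ)) from by ring] at h ⊢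
        rw [h]
      rw [h1, Nat.factorial_succ]
      have h2 : (n.factorial : ℚ) ≠ 0 := by positivity
      have h3 : ((n:ℚ) + 1) ≠ 0 := by positivity
      push_cast
      field_simp
      ring

/-- For `k ≥ 1`, `n ≥ 1`:
`n!·[x^n](Y^k) = k·(n-1)(n-2)···(n-(k-1))·n^{n-k}` (the power taken in `ℚ`). -/
theorem stmt14 (k n : ℕ) (hk : 1 ≤ k) (hn : 1 ≤ n) :
    (n.factorial : ℚ) * PowerSeries.coeff n (Yt ^ k) =
      (k : ℚ) * (∏ i ∈ Finset.range (k - 1), ((n : ℚ) - (i + 1))) *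
        (n : ℚ) ^ ((n : ℤ) - k) := by
  have hY : Yt ^ k = PowerSeries.X ^ k * Ef k := by
    rw [Yt_eq, mul_pow, Ef_pow]
  rw [hY, PowerSeries.coeff_X_pow_mul']
  by_cases hkn : k ≤ n
  · rw [if_pos hkn]
    rw [Ef, PowerSeries.coeff_mk]
    rw [show (n : ℤ) - k = ((n - k : ℕ) : ℤ) from by omega, zpow_natCast]
    have hprod : ∏ i ∈ Finset.range (k - 1), ((n : ℚ) - (i + 1))
        = (((n-1).descFactorial (k-1) : ℕ) : ℚ) := by
      rw [Nat.descFactorial_eq_prod_range, Nat.cast_prod]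
      apply Finset.prod_congr rfl
      intro i hi
      rw [Finset.mem_range] at hi
      push_cast [Nat.cast_sub (show i ≤ n - 1 by omega), Nat.cast_sub (show 1 ≤ n by omega)]
      ring
    rw [hprod]
    have hfac : (n - k).factorial * (n-1).descFactorial (k-1) = (n-1).factorial := by
      have h := Nat.factorial_mul_descFactorial (show k - 1 ≤ n - 1 by omega)
      rwa [show n - 1 - (k - 1) = n - k from by omega] at h
    have hfacQ : (((n - k).factorial : ℕ) : ℚ) * (((n-1).descFactorial (k-1) : ℕ) : ℚ)
        = (((n-1).factorial : ℕ) : ℚ) := by exact_mod_cast congrArg (Nat.cast (R := ℚ)) hfac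
    have hnfacQ : ((n.factorial : ℕ) : ℚ) = (n : ℚ) * ((n-1).factorial : ℚ) := by
      rw [← Nat.mul_factorial_pred (show n ≠ 0 by omega)]
      push_cast
      ring
    rcases Nat.eq_or_lt_of_le hkn with heq | hlt
    · subst heq
      rw [Nat.sub_self, tf_zero, Nat.factorial_zero, Nat.descFactorial_self, pow_zero]
      rw [hnfacQ]
      push_cast
      ring
    · rw [tf_pos k (n - k) (by omega)]
      rw [show (k : ℚ) + ((n - k : ℕ) : ℚ) = (n : ℚ) from by
        push_cast [Nat.cast_sub hkn]; ring]
      have hF : (((n - k).factorial : ℕ) : ℚ) ≠ 0 := by positivity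
      rw [← mul_div_assoc, div_eq_iff hF]
      have hpow : (n : ℚ) ^ (n - k) = (n : ℚ) * (n : ℚ) ^ (n - k - 1) := by
        have h := pow_succ' (n : ℚ) (n - k - 1)
        rwa [show n - k - 1 + 1 = n - k from by omega] at h
      calc (n.factorial : ℚ) * ((k : ℚ) * (n : ℚ) ^ (n - k - 1))
          = ((n : ℚ) * ((n-1).factorial : ℚ)) * ((k : ℚ) * (n : ℚ) ^ (n - k - 1)) := by
            rw [hnfacQ]
        _ = (k : ℚ) * (((n-1).descFactorial (k-1) : ℕ) : ℚ) * ((n : ℚ) ^ (n - k))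
              * (((n - k).factorial : ℕ) : ℚ) := by
            rw [← hfacQ, hpow]
            ring
  · rw [if_neg hkn, mul_zero]
    have hzero : ∏ i ∈ Finset.range (k - 1), ((n : ℚ) - (i + 1)) = 0 := by
      apply Finset.prod_eq_zero (Finset.mem_range.mpr (show n - 1 < k - 1 by omega))
      push_cast [Nat.cast_sub (show 1 ≤ n by omega)]
      ring
    rw [hzero, mul_zero, zero_mul]
end

section
/- Let Q_n := ∑_{k=2}^{⌊n/2⌋} n!/((n-2k)!·n^{2k}) (a real number). Then Q_n ~ √(π/8)·√n as n → ∞, i.e., Q_n/√n tends to √(π/8). -/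
open Filter Finset Real MeasureTheory

private lemma st16_exp_neg_le (m : ℕ) {x : ℝ} (hx : 0 < x) :
    Real.exp (-x) ≤ (m.factorial : ℝ) / x ^ m := by
  have h1 : x ^ m / (m.factorial : ℝ) ≤ Real.exp x := by
    refine le_trans ?_ (Real.sum_le_exp_of_nonneg hx.le (m + 1))
    exact Finset.single_le_sum (f := fun i => x ^ i / (i.factorial : ℝ))
      (fun i _ => by positivity) (Finset.self_mem_range_succ m)
  have h2 : (0:ℝ) < x ^ m / (m.factorial : ℝ) := by positivity
  rw [Real.exp_neg]
  calc (Real.exp x)⁻¹ ≤ (x ^ m / (m.factorial : ℝ))⁻¹ := by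
        exact inv_anti₀ h2 h1
    _ = (m.factorial : ℝ) / x ^ m := by rw [inv_div]

private lemma st16_exp_quad {x : ℝ} (h0 : 0 ≤ x) (h2 : x ≤ 1/2) :
    Real.exp (-(x + 2*x^2)) ≤ 1 - x := by
  have hx1 : (0:ℝ) < 1 - x := by linarith
  rw [← Real.exp_log hx1, Real.exp_le_exp]
  have hlog : Real.log (1-x)⁻¹ ≤ (1-x)⁻¹ - 1 := Real.log_le_sub_one_of_pos (by positivity)
  rw [Real.log_inv] at hlog
  have h3 : (1-x)⁻¹ - 1 = x / (1-x) := by field_simp; ring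
  have h4 : x / (1-x) ≤ x + 2*x^2 := by
    rw [div_le_iff₀ hx1]; nlinarith
  rw [h3] at hlog
  linarith

private lemma st16_sum_id (m : ℕ) : ∑ i ∈ Finset.range m, (i:ℝ) = m*(m-1)/2 := by
  induction m with
  | zero => simp
  | succ p ih => rw [Finset.sum_range_succ, ih]; push_cast; ring

private lemma st16_sum_sq_le (m : ℕ) : ∑ i ∈ Finset.range m, (i:ℝ)^2 ≤ (m:ℝ)^3 := by
  calc ∑ i ∈ Finset.range m, (i:ℝ)^2 ≤ ∑ _i ∈ Finset.range m, (m:ℝ)^2 := by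
        refine Finset.sum_le_sum fun i hi => ?_
        have hi' : i ≤ m := (Finset.mem_range.1 hi).le
        exact pow_le_pow_left₀ (Nat.cast_nonneg i) (by exact_mod_cast hi') 2
    _ = m * (m:ℝ)^2 := by rw [Finset.sum_const, Finset.card_range, nsmul_eq_mul]
    _ = (m:ℝ)^3 := by ring

private lemma st16_prod_form {n k : ℕ} (hn : 0 < n) (hk : 2*k ≤ n) :
    (n.factorial : ℝ) / (((n - 2*k).factorial : ℝ) * (n:ℝ) ^ (2*k)) =
      ∏ i ∈ Finset.range (2*k), (1 - (i:ℝ)/n) := by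
  have hn0 : (n:ℝ) ≠ 0 := Nat.cast_ne_zero.2 hn.ne'
  have hf0 : ((n - 2*k).factorial : ℝ) ≠ 0 := Nat.cast_ne_zero.2 (Nat.factorial_pos _).ne'
  have hfac := Nat.factorial_mul_descFactorial hk
  have h1 : (n.factorial : ℝ) = ((n-2*k).factorial : ℝ) * (n.descFactorial (2*k) : ℝ) := by
    exact_mod_cast congrArg (fun m : ℕ => (m : ℝ)) hfac.symm
  rw [h1, mul_div_mul_left _ _ hf0, Nat.descFactorial_eq_prod_range]
  have h2 : ((∏ i ∈ Finset.range (2*k), (n - i) : ℕ) : ℝ)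
      = ∏ i ∈ Finset.range (2*k), ((n:ℝ) - i) := by
    rw [Nat.cast_prod]
    refine Finset.prod_congr rfl fun i hi => ?_
    have : i ≤ n := le_trans (Finset.mem_range.1 hi).le hk
    rw [Nat.cast_sub this]
  rw [h2]
  have h3 : (n:ℝ)^(2*k) = ∏ _i ∈ Finset.range (2*k), (n:ℝ) := by
    rw [Finset.prod_const, Finset.card_range]
  rw [h3, ← Finset.prod_div_distrib]
  exact Finset.prod_congr rfl fun i _ => by field_simp

private lemma st16_upper {n k : ℕ} (hn : 0 < n) (hk : 2*k ≤ n) :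
    ∏ i ∈ Finset.range (2*k), (1 - (i:ℝ)/n) ≤
      Real.exp (-2*(k:ℝ)^2/n) * Real.exp ((k:ℝ)/n) := by
  rw [← Real.exp_add]
  calc ∏ i ∈ Finset.range (2*k), (1 - (i:ℝ)/n)
      ≤ ∏ i ∈ Finset.range (2*k), Real.exp (-((i:ℝ)/n)) := by
        apply Finset.prod_le_prod
        · intro i hi
          have hi' : i ≤ n := le_trans (Finset.mem_range.1 hi).le hk
          have : (i:ℝ) ≤ n := by exact_mod_cast hi'
          have hn' : (0:ℝ) < n := by exact_mod_cast hn
          rw [sub_nonneg, div_le_one hn']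
          exact this
        · intro i _
          have := Real.add_one_le_exp (-((i:ℝ)/n))
          linarith
    _ = Real.exp (∑ i ∈ Finset.range (2*k), -((i:ℝ)/n)) := (Real.exp_sum _ _).symm
    _ ≤ Real.exp (-2*(k:ℝ)^2/n + (k:ℝ)/n) := by
        rw [Real.exp_le_exp]
        have hsum : ∑ i ∈ Finset.range (2*k), -((i:ℝ)/n)
            = -((∑ i ∈ Finset.range (2*k), (i:ℝ)) / n) := by
          simp [Finset.sum_neg_distrib, Finset.sum_div]
        rw [hsum, st16_sum_id]
        have h2k : ((2*k : ℕ) : ℝ) = 2*(k:ℝ) := by push_cast; ring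
        rw [h2k]
        apply le_of_eq
        field_simp
        ring

private lemma st16_lower {n k : ℕ} (hn : 0 < n) (hk : 4*k ≤ n) :
    Real.exp (-2*(k:ℝ)^2/n) * Real.exp (-(16*(k:ℝ)^3/(n:ℝ)^2)) ≤
      ∏ i ∈ Finset.range (2*k), (1 - (i:ℝ)/n) := by
  have hn' : (0:ℝ) < n := by exact_mod_cast hn
  rw [← Real.exp_add]
  calc Real.exp (-2*(k:ℝ)^2/n + -(16*(k:ℝ)^3/(n:ℝ)^2))
      ≤ Real.exp (∑ i ∈ Finset.range (2*k), -(((i:ℝ)/n) + 2*((i:ℝ)/n)^2)) := by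
        rw [Real.exp_le_exp]
        have hs1 : ∑ i ∈ Finset.range (2*k), (i:ℝ)/n ≤ 2*(k:ℝ)^2/n := by
          rw [← Finset.sum_div, st16_sum_id]
          have h2k : ((2*k : ℕ) : ℝ) = 2*(k:ℝ) := by push_cast; ring
          rw [h2k]
          gcongr
          nlinarith [Nat.cast_nonneg (α := ℝ) k]
        have hs2 : ∑ i ∈ Finset.range (2*k), 2*((i:ℝ)/n)^2 ≤ 16*(k:ℝ)^3/(n:ℝ)^2 := by
          have heq : ∀ i ∈ Finset.range (2*k), 2*((i:ℝ)/n)^2 = 2*(i:ℝ)^2/(n:ℝ)^2 := by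
            intro i _; rw [div_pow]; ring
          rw [Finset.sum_congr rfl heq]
          have : ∑ i ∈ Finset.range (2*k), 2*(i:ℝ)^2/(n:ℝ)^2
              = 2*(∑ i ∈ Finset.range (2*k), (i:ℝ)^2)/(n:ℝ)^2 := by
            rw [Finset.mul_sum, Finset.sum_div]
          rw [this]
          have hsq := st16_sum_sq_le (2*k)
          have h2k : ((2*k : ℕ) : ℝ) = 2*(k:ℝ) := by push_cast; ring
          rw [h2k] at hsq
          gcongr ?_ / _
          nlinarith
        have hexp : ∑ i ∈ Finset.range (2*k), -(((i:ℝ)/n) + 2*((i:ℝ)/n)^2)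
            = -((∑ i ∈ Finset.range (2*k), (i:ℝ)/n)
              + ∑ i ∈ Finset.range (2*k), 2*((i:ℝ)/n)^2) := by
          rw [← Finset.sum_add_distrib, Finset.sum_neg_distrib]
        rw [hexp]
        linarith [hs1, hs2, (by ring : -2*(k:ℝ)^2/(n:ℝ) + -(16*(k:ℝ)^3/(n:ℝ)^2)
          = -((2*(k:ℝ)^2/(n:ℝ)) + (16*(k:ℝ)^3/(n:ℝ)^2)))]
    _ = ∏ i ∈ Finset.range (2*k), Real.exp (-(((i:ℝ)/n) + 2*((i:ℝ)/n)^2)) := Real.exp_sum _ _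
    _ ≤ ∏ i ∈ Finset.range (2*k), (1 - (i:ℝ)/n) := by
        refine Finset.prod_le_prod (fun i _ => (Real.exp_pos _).le) (fun i hi => ?_)
        apply st16_exp_quad (by positivity)
        have hi' : i < 2*k := Finset.mem_range.1 hi
        have h2i : 2*i ≤ n := by omega
        rw [div_le_iff₀ hn']
        have : (2*i : ℕ) ≤ (n : ℕ) := h2i
        have hc : (2*(i:ℝ)) ≤ (n:ℝ) := by exact_mod_cast this
        linarith

private lemma st16_gauss_sum {n : ℕ} (M p : ℕ) (hn : 1 ≤ n) :
    ∑ k ∈ Finset.Icc 2 M, (k:ℝ)^p * Real.exp (-2*(k:ℝ)^2/n) ≤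
      ((Nat.sqrt n : ℝ))^(p+1) +
        (((p+2).factorial : ℝ) * (n:ℝ)^(p+2) / (2^(p+2) * ((Nat.sqrt n : ℝ)+1)^(p+2)))
          * ((Nat.sqrt n : ℝ))⁻¹ := by
  set s := Nat.sqrt n with hsdef
  have hs1 : 1 ≤ s := Nat.sqrt_pos.2 hn
  have hn' : (0:ℝ) < n := by exact_mod_cast hn
  have hs1' : (1:ℝ) ≤ s := by exact_mod_cast hs1
  rw [← Finset.sum_filter_add_sum_filter_not (Finset.Icc 2 M) (fun k => k ≤ s)]
  have hpart1 : ∑ k ∈ (Finset.Icc 2 M).filter (fun k => k ≤ s),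
      (k:ℝ)^p * Real.exp (-2*(k:ℝ)^2/n) ≤ ((s:ℝ))^(p+1) := by
    have hsub : (Finset.Icc 2 M).filter (fun k => k ≤ s) ⊆ Finset.Icc 2 s := by
      intro k hk
      simp only [Finset.mem_filter, Finset.mem_Icc] at hk ⊢
      exact ⟨hk.1.1, hk.2⟩
    calc ∑ k ∈ (Finset.Icc 2 M).filter (fun k => k ≤ s),
          (k:ℝ)^p * Real.exp (-2*(k:ℝ)^2/n)
        ≤ ∑ _k ∈ (Finset.Icc 2 M).filter (fun k => k ≤ s), (s:ℝ)^p := by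
          refine Finset.sum_le_sum fun k hk => ?_
          have hks : k ≤ s := (Finset.mem_filter.1 hk).2
          have h1 : Real.exp (-2*(k:ℝ)^2/n) ≤ 1 := by
            rw [Real.exp_le_one_iff]
            have : (0:ℝ) ≤ (k:ℝ)^2 := by positivity
            rw [div_nonpos_iff]
            right; constructor <;> nlinarith
          calc (k:ℝ)^p * Real.exp (-2*(k:ℝ)^2/n) ≤ (k:ℝ)^p * 1 := by
                apply mul_le_mul_of_nonneg_left h1 (by positivity)
            _ = (k:ℝ)^p := mul_one _
            _ ≤ (s:ℝ)^p := by
                apply pow_le_pow_left₀ (Nat.cast_nonneg k)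
                exact_mod_cast hks
      _ = (((Finset.Icc 2 M).filter (fun k => k ≤ s)).card : ℝ) * (s:ℝ)^p := by
          rw [Finset.sum_const, nsmul_eq_mul]
      _ ≤ (s:ℝ) * (s:ℝ)^p := by
          have hcard : ((Finset.Icc 2 M).filter (fun k => k ≤ s)).card ≤ s := by
            calc ((Finset.Icc 2 M).filter (fun k => k ≤ s)).card
                ≤ (Finset.Icc 2 s).card := Finset.card_le_card hsub
              _ = s + 1 - 2 := Nat.card_Icc 2 s
              _ ≤ s := by omega
          apply mul_le_mul_of_nonneg_right _ (by positivity)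
          exact_mod_cast hcard
      _ = (s:ℝ)^(p+1) := by ring
  have hpart2 : ∑ k ∈ (Finset.Icc 2 M).filter (fun k => ¬ k ≤ s),
      (k:ℝ)^p * Real.exp (-2*(k:ℝ)^2/n) ≤
      (((p+2).factorial : ℝ) * (n:ℝ)^(p+2) / (2^(p+2) * ((s:ℝ)+1)^(p+2))) * ((s:ℝ))⁻¹ := by
    set C : ℝ := ((p+2).factorial : ℝ) * (n:ℝ)^(p+2) / (2^(p+2) * ((s:ℝ)+1)^(p+2)) with hC
    have hC0 : 0 ≤ C := by positivity
    have hterm : ∀ k ∈ (Finset.Icc 2 M).filter (fun k => ¬ k ≤ s),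
        (k:ℝ)^p * Real.exp (-2*(k:ℝ)^2/n) ≤ C * ((k:ℝ)^2)⁻¹ := by
      intro k hk
      have hks : s < k := by simpa using (Finset.mem_filter.1 hk).2
      have hk1 : (1:ℝ) ≤ k := by
        have : 1 ≤ k := le_trans hs1 hks.le
        exact_mod_cast this
      have hks' : (s:ℝ) + 1 ≤ k := by exact_mod_cast hks
      have hx : (0:ℝ) < 2*((s:ℝ)+1)*k/n := by positivity
      have h1 : Real.exp (-2*(k:ℝ)^2/n) ≤ Real.exp (-(2*((s:ℝ)+1)*k/n)) := by
        rw [Real.exp_le_exp,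
          show (-2*(k:ℝ)^2/n : ℝ) = -((2*(k:ℝ)^2)/n) from by ring]
        apply neg_le_neg
        rw [div_le_div_iff₀ hn' hn']
        nlinarith [mul_le_mul_of_nonneg_left hks'
          (by positivity : (0:ℝ) ≤ 2*(k:ℝ)*(n:ℝ))]
      have h2 : Real.exp (-(2*((s:ℝ)+1)*k/n)) ≤
          ((p+2).factorial : ℝ) / (2*((s:ℝ)+1)*k/n)^(p+2) := st16_exp_neg_le _ hx
      calc (k:ℝ)^p * Real.exp (-2*(k:ℝ)^2/n)
          ≤ (k:ℝ)^p * (((p+2).factorial : ℝ) / (2*((s:ℝ)+1)*k/n)^(p+2)) := by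
            apply mul_le_mul_of_nonneg_left (h1.trans h2) (by positivity)
        _ = C * ((k:ℝ)^2)⁻¹ := by
            rw [hC]
            have hk0 : (k:ℝ) ≠ 0 := by positivity
            have hs0 : ((s:ℝ)+1) ≠ 0 := by positivity
            have hnn : (n:ℝ) ≠ 0 := hn'.ne'
            have hpow : (2*((s:ℝ)+1)*(k:ℝ)/(n:ℝ))^(p+2)
                = 2^(p+2)*(((s:ℝ)+1)^(p+2))*((k:ℝ)^p*(k:ℝ)^2)/(n:ℝ)^(p+2) := by
              rw [div_pow, mul_pow, mul_pow, ← pow_add]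
            rw [hpow]
            field_simp
    calc ∑ k ∈ (Finset.Icc 2 M).filter (fun k => ¬ k ≤ s),
        (k:ℝ)^p * Real.exp (-2*(k:ℝ)^2/n)
        ≤ ∑ k ∈ (Finset.Icc 2 M).filter (fun k => ¬ k ≤ s), C * ((k:ℝ)^2)⁻¹ :=
          Finset.sum_le_sum hterm
      _ = C * ∑ k ∈ (Finset.Icc 2 M).filter (fun k => ¬ k ≤ s), ((k:ℝ)^2)⁻¹ :=
          (Finset.mul_sum _ _ _).symm
      _ ≤ C * ((s:ℝ))⁻¹ := by
          apply mul_le_mul_of_nonneg_left _ hC0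
          have hsub2 : (Finset.Icc 2 M).filter (fun k => ¬ k ≤ s) ⊆ Finset.Ioc s M := by
            intro k hk
            simp only [Finset.mem_filter, Finset.mem_Icc, not_le] at hk
            exact Finset.mem_Ioc.2 ⟨hk.2, hk.1.2⟩
          calc ∑ k ∈ (Finset.Icc 2 M).filter (fun k => ¬ k ≤ s), ((k:ℝ)^2)⁻¹
              ≤ ∑ k ∈ Finset.Ioc s M, ((k:ℝ)^2)⁻¹ := by
                apply Finset.sum_le_sum_of_subset_of_nonneg hsub2
                intro k _ _; positivity
            _ ≤ ((s:ℝ))⁻¹ := by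
                rcases le_or_gt s M with h | h
                · have := sum_Ioc_inv_sq_le_sub (α := ℝ) (by omega : s ≠ 0) h
                  have hM : (0:ℝ) ≤ ((M:ℝ))⁻¹ := by positivity
                  linarith
                · rw [Finset.Ioc_eq_empty (by omega)]
                  simp only [Finset.sum_empty]
                  positivity
  exact add_le_add hpart1 hpart2

private lemma st16_S1 {n : ℕ} (M : ℕ) (hn : 1 ≤ n) :
    ∑ k ∈ Finset.Icc 2 M, (k:ℝ) * Real.exp (-2*(k:ℝ)^2/n) ≤ 3*(n:ℝ) := by
  have h := st16_gauss_sum M 1 hn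
  simp only [pow_one] at h
  refine h.trans ?_
  set s := Nat.sqrt n with hsdef
  have hs1 : 1 ≤ s := Nat.sqrt_pos.2 hn
  have hs1' : (1:ℝ) ≤ s := by exact_mod_cast hs1
  have hsq : ((s:ℝ))^2 ≤ n := by exact_mod_cast Nat.sqrt_le' n
  have hsq2 : (n:ℝ) < ((s:ℝ)+1)^2 := by exact_mod_cast Nat.lt_succ_sqrt' n
  have hn' : (1:ℝ) ≤ n := by exact_mod_cast hn
  have hfac : ((1+2).factorial : ℝ) = 6 := by norm_num [Nat.factorial]
  have hs0 : (0:ℝ) < s := by linarith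
  have hsp0 : (0:ℝ) < (s:ℝ)+1 := by linarith
  -- second term ≤ 2n
  have h2 : (6 * (n:ℝ)^(1+2) / (2^(1+2) * ((s:ℝ)+1)^(1+2))) * ((s:ℝ))⁻¹ ≤ 2*n := by
    have hX : (6:ℝ) * (n:ℝ)^(1+2) / (2^(1+2) * ((s:ℝ)+1)^(1+2)) * ((s:ℝ))⁻¹
        = 6*(n:ℝ)^3/(16*(((s:ℝ)+1)^3*(s:ℝ))/2) := by
      field_simp
      ring
    rw [hX, div_le_iff₀ (by positivity)]
    have hb : (n:ℝ)^2 ≤ ((s:ℝ)+1)^4 := by nlinarith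
    have hss : ((s:ℝ)+1) ≤ 2*s := by linarith
    have k1 : 8*(n:ℝ)*((s:ℝ)+1)^4 ≤ 16*(n:ℝ)*(((s:ℝ)+1)^3*(s:ℝ)) := by
      nlinarith [mul_le_mul_of_nonneg_left hss
        (by positivity : (0:ℝ) ≤ 8*(n:ℝ)*((s:ℝ)+1)^3)]
    have k2 : 8*(n:ℝ)*(n:ℝ)^2 ≤ 8*(n:ℝ)*((s:ℝ)+1)^4 :=
      mul_le_mul_of_nonneg_left hb (by positivity)
    have k0 : 8*(n:ℝ)*(n:ℝ)^2 = 8*(n:ℝ)^3 := by ring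
    have k3 : (0:ℝ) ≤ (n:ℝ)^3 := by positivity
    nlinarith [k1, k2, k0, k3]
  have h1 : ((s:ℝ))^(1+1) ≤ (n:ℝ) := by
    rw [show (1+1 : ℕ) = 2 from rfl]; exact hsq
  rw [hfac]
  exact le_trans (add_le_add h1 h2) (by linarith)

private lemma st16_S3 {n : ℕ} (M : ℕ) (hn : 1 ≤ n) :
    ∑ k ∈ Finset.Icc 2 M, (k:ℝ)^3 * Real.exp (-2*(k:ℝ)^2/n) ≤ 9*(n:ℝ)^2 := by
  have h := st16_gauss_sum M 3 hn
  refine h.trans ?_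
  set s := Nat.sqrt n with hsdef
  have hs1 : 1 ≤ s := Nat.sqrt_pos.2 hn
  have hs1' : (1:ℝ) ≤ s := by exact_mod_cast hs1
  have hsq : ((s:ℝ))^2 ≤ n := by exact_mod_cast Nat.sqrt_le' n
  have hsq2 : (n:ℝ) < ((s:ℝ)+1)^2 := by exact_mod_cast Nat.lt_succ_sqrt' n
  have hn' : (1:ℝ) ≤ n := by exact_mod_cast hn
  have hfac : ((3+2).factorial : ℝ) = 120 := by norm_num [Nat.factorial]
  have hs0 : (0:ℝ) < s := by linarith
  have hsp0 : (0:ℝ) < (s:ℝ)+1 := by linarith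
  have h2 : (120 * (n:ℝ)^(3+2) / (2^(3+2) * ((s:ℝ)+1)^(3+2))) * ((s:ℝ))⁻¹ ≤ 8*(n:ℝ)^2 := by
    have hX : (120:ℝ) * (n:ℝ)^(3+2) / (2^(3+2) * ((s:ℝ)+1)^(3+2)) * ((s:ℝ))⁻¹
        = 120*(n:ℝ)^5/(64*(((s:ℝ)+1)^5*(s:ℝ))/2) := by
      field_simp
      ring
    rw [hX, div_le_iff₀ (by positivity)]
    have hb : (n:ℝ)^3 ≤ ((s:ℝ)+1)^6 := by
      have := pow_le_pow_left₀ (by positivity : (0:ℝ) ≤ (n:ℝ)) hsq2.le 3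
      calc (n:ℝ)^3 ≤ (((s:ℝ)+1)^2)^3 := this
        _ = ((s:ℝ)+1)^6 := by ring
    have hss : ((s:ℝ)+1) ≤ 2*s := by linarith
    have k1 : 16*(n:ℝ)^2*((s:ℝ)+1)^6 ≤ 32*(n:ℝ)^2*(((s:ℝ)+1)^5*(s:ℝ)) := by
      nlinarith [mul_le_mul_of_nonneg_left hss
        (by positivity : (0:ℝ) ≤ 16*(n:ℝ)^2*((s:ℝ)+1)^5)]
    have k2 : 16*(n:ℝ)^2*(n:ℝ)^3 ≤ 16*(n:ℝ)^2*((s:ℝ)+1)^6 :=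
      mul_le_mul_of_nonneg_left hb (by positivity)
    have k0 : 16*(n:ℝ)^2*(n:ℝ)^3 = 16*(n:ℝ)^5 := by ring
    have k3 : (0:ℝ) ≤ (n:ℝ)^5 := by positivity
    nlinarith [k1, k2, k0, k3]
  have h1 : ((s:ℝ))^(3+1) ≤ (n:ℝ)^2 := by
    have : ((s:ℝ))^(3+1) = (((s:ℝ))^2)^2 := by ring
    rw [this]
    nlinarith
  rw [hfac]
  exact le_trans (add_le_add h1 h2) (by linarith)









private lemma st16_exp_sub_one {y : ℝ} (h0 : 0 ≤ y) (h1 : y ≤ 1/2) :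
    Real.exp y - 1 ≤ 3*y := by
  have hc : Real.exp y ≤ 3 := by
    have ha : Real.exp y ≤ Real.exp (1/2) := Real.exp_le_exp.2 h1
    have hb : Real.exp (1/2) * Real.exp (1/2) = Real.exp 1 := by
      rw [← Real.exp_add]; norm_num
    have hd := Real.exp_one_lt_d9
    nlinarith [Real.exp_pos (1/2)]
  have ha := Real.add_one_le_exp (-y)
  rw [Real.exp_neg] at ha
  have hd : (0:ℝ) < Real.exp y := Real.exp_pos y
  have he : (Real.exp y)⁻¹ * Real.exp y = 1 := inv_mul_cancel₀ hd.ne'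
  nlinarith [mul_le_mul_of_nonneg_right ha hd.le]

private lemma st16_err {n : ℕ} (hn : 16 ≤ n) :
    |∑ k ∈ Finset.Icc 2 (n / 2),
        ((n.factorial : ℝ) / (((n - 2*k).factorial : ℝ) * (n:ℝ)^(2*k))
          - Real.exp (-2*(k:ℝ)^2/n))| ≤ 4000 := by
  have hn0 : 0 < n := by omega
  have hn1 : 1 ≤ n := by omega
  have hn' : (0:ℝ) < n := by exact_mod_cast hn0
  have hkey : ∀ k ∈ Finset.Icc 2 (n / 2),
      |(n.factorial : ℝ) / (((n - 2*k).factorial : ℝ) * (n:ℝ)^(2*k))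
          - Real.exp (-2*(k:ℝ)^2/n)|
        ≤ 3*((k:ℝ)/n) * Real.exp (-2*(k:ℝ)^2/n)
          + (16*(k:ℝ)^3/(n:ℝ)^2) * Real.exp (-2*(k:ℝ)^2/n)
          + Real.exp (-(n:ℝ)/8) := by
    intro k hk
    have hk2 : 2*k ≤ n := by
      have := (Finset.mem_Icc.1 hk).2; omega
    have hg0 : (0:ℝ) < Real.exp (-2*(k:ℝ)^2/n) := Real.exp_pos _
    set g : ℝ := Real.exp (-2*(k:ℝ)^2/n) with hgdef
    rw [st16_prod_form hn0 hk2]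
    set P : ℝ := ∏ i ∈ Finset.range (2*k), (1 - (i:ℝ)/n) with hPdef
    have hP0 : 0 ≤ P := by
      apply Finset.prod_nonneg
      intro i hi
      have hi' : i ≤ n := le_trans (Finset.mem_range.1 hi).le hk2
      have : (i:ℝ) ≤ n := by exact_mod_cast hi'
      rw [sub_nonneg, div_le_one hn']
      exact this
    -- upper side
    have hup : P - g ≤ 3*((k:ℝ)/n) * g := by
      have h1 := st16_upper hn0 hk2
      have h2 : Real.exp ((k:ℝ)/n) - 1 ≤ 3*((k:ℝ)/n) := by
        apply st16_exp_sub_one (by positivity)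
        rw [div_le_iff₀ hn']
        have : (2*k : ℕ) ≤ n := hk2
        have hc : 2*(k:ℝ) ≤ n := by exact_mod_cast this
        linarith
      nlinarith
    -- lower side
    have hdown : g - P ≤ (16*(k:ℝ)^3/(n:ℝ)^2) * g + Real.exp (-(n:ℝ)/8) := by
      rcases le_or_gt (4*k) n with h4 | h4
      · have h1 := st16_lower hn0 h4
        have h2 : 1 - 16*(k:ℝ)^3/(n:ℝ)^2 ≤ Real.exp (-(16*(k:ℝ)^3/(n:ℝ)^2)) := by
          have := Real.add_one_le_exp (-(16*(k:ℝ)^3/(n:ℝ)^2))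
          linarith
        have h3 : (0:ℝ) < Real.exp (-(n:ℝ)/8) := Real.exp_pos _
        nlinarith
      · have h1 : g ≤ Real.exp (-(n:ℝ)/8) := by
          rw [hgdef, Real.exp_le_exp]
          have hc : (n:ℝ) ≤ 4*(k:ℝ) := by exact_mod_cast h4.le
          rw [show (-2*(k:ℝ)^2/n : ℝ) = -(2*(k:ℝ)^2/n) from by ring,
            show (-(n:ℝ)/8 : ℝ) = -((n:ℝ)/8) from by ring]
          apply neg_le_neg
          rw [div_le_div_iff₀ (by norm_num) hn']
          nlinarith
        have h2 : (0:ℝ) ≤ (16*(k:ℝ)^3/(n:ℝ)^2) * g := by positivity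
        linarith
    rw [abs_sub_le_iff]
    constructor
    · have : (0:ℝ) ≤ (16*(k:ℝ)^3/(n:ℝ)^2) * g := by positivity
      have h3 : (0:ℝ) < Real.exp (-(n:ℝ)/8) := Real.exp_pos _
      linarith
    · have : (0:ℝ) ≤ 3*((k:ℝ)/n) * g := by positivity
      linarith
  calc |∑ k ∈ Finset.Icc 2 (n / 2),
        ((n.factorial : ℝ) / (((n - 2*k).factorial : ℝ) * (n:ℝ)^(2*k))
          - Real.exp (-2*(k:ℝ)^2/n))|
      ≤ ∑ k ∈ Finset.Icc 2 (n / 2),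
        |(n.factorial : ℝ) / (((n - 2*k).factorial : ℝ) * (n:ℝ)^(2*k))
          - Real.exp (-2*(k:ℝ)^2/n)| := Finset.abs_sum_le_sum_abs _ _
    _ ≤ ∑ k ∈ Finset.Icc 2 (n / 2),
        (3*((k:ℝ)/n) * Real.exp (-2*(k:ℝ)^2/n)
          + (16*(k:ℝ)^3/(n:ℝ)^2) * Real.exp (-2*(k:ℝ)^2/n)
          + Real.exp (-(n:ℝ)/8)) := Finset.sum_le_sum hkey
    _ = (3/(n:ℝ)) * ∑ k ∈ Finset.Icc 2 (n / 2), (k:ℝ) * Real.exp (-2*(k:ℝ)^2/n)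
        + (16/(n:ℝ)^2) * ∑ k ∈ Finset.Icc 2 (n / 2), (k:ℝ)^3 * Real.exp (-2*(k:ℝ)^2/n)
        + ((Finset.Icc 2 (n / 2)).card : ℝ) * Real.exp (-(n:ℝ)/8) := by
        rw [Finset.sum_add_distrib, Finset.sum_add_distrib, Finset.sum_const,
          Finset.mul_sum, Finset.mul_sum, nsmul_eq_mul]
        congr 1
        congr 1
        · exact Finset.sum_congr rfl fun k _ => by ring
        · exact Finset.sum_congr rfl fun k _ => by ring
    _ ≤ 4000 := by
        have hS1 := st16_S1 (n/2) hn1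
        have hS3 := st16_S3 (n/2) hn1
        have hcard : ((Finset.Icc 2 (n / 2)).card : ℝ) ≤ n := by
          rw [Nat.card_Icc]
          have : n/2 + 1 - 2 ≤ n := by omega
          exact_mod_cast this
        have hexp : Real.exp (-(n:ℝ)/8) ≤ 3072/(n:ℝ)^3 := by
          have hx : (0:ℝ) < (n:ℝ)/8 := by positivity
          have := st16_exp_neg_le 3 hx
          rw [show (-(n:ℝ)/8 : ℝ) = -((n:ℝ)/8) from by ring]
          refine this.trans (le_of_eq ?_)
          rw [div_pow]
          norm_num [Nat.factorial]
          ring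
        have hterm3 : ((Finset.Icc 2 (n / 2)).card : ℝ) * Real.exp (-(n:ℝ)/8)
            ≤ 3072 := by
          have h1 : ((Finset.Icc 2 (n / 2)).card : ℝ) * Real.exp (-(n:ℝ)/8)
              ≤ (n:ℝ) * (3072/(n:ℝ)^3) :=
            mul_le_mul hcard hexp (Real.exp_pos _).le (by positivity)
          have h2 : (n:ℝ) * (3072/(n:ℝ)^3) = 3072/(n:ℝ)^2 := by
            field_simp
          have h3 : (3072:ℝ)/(n:ℝ)^2 ≤ 3072 := by
            rw [div_le_iff₀ (by positivity)]
            have : (1:ℝ) ≤ (n:ℝ) := by exact_mod_cast hn1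
            nlinarith
          linarith
        have hterm1 : (3/(n:ℝ)) * ∑ k ∈ Finset.Icc 2 (n / 2),
            (k:ℝ) * Real.exp (-2*(k:ℝ)^2/n) ≤ 9 := by
          have h1 : (3/(n:ℝ)) * ∑ k ∈ Finset.Icc 2 (n / 2),
              (k:ℝ) * Real.exp (-2*(k:ℝ)^2/n) ≤ (3/(n:ℝ)) * (3*(n:ℝ)) :=
            mul_le_mul_of_nonneg_left hS1 (by positivity)
          have h2 : (3/(n:ℝ)) * (3*(n:ℝ)) = 9 := by field_simp; ring
          linarith
        have hterm2 : (16/(n:ℝ)^2) * ∑ k ∈ Finset.Icc 2 (n / 2),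
            (k:ℝ)^3 * Real.exp (-2*(k:ℝ)^2/n) ≤ 144 := by
          have h1 : (16/(n:ℝ)^2) * ∑ k ∈ Finset.Icc 2 (n / 2),
              (k:ℝ)^3 * Real.exp (-2*(k:ℝ)^2/n) ≤ (16/(n:ℝ)^2) * (9*(n:ℝ)^2) :=
            mul_le_mul_of_nonneg_left hS3 (by positivity)
          have h2 : (16/(n:ℝ)^2) * (9*(n:ℝ)^2) = 144 := by field_simp; ring
          linarith
        linarith

private lemma st16_sqrt_tendsto : Tendsto (fun n : ℕ => Real.sqrt n) atTop atTop := by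
  rw [tendsto_atTop_atTop]
  intro b
  refine ⟨(⌈b⌉₊)^2, fun n hn => ?_⟩
  calc b ≤ (⌈b⌉₊ : ℝ) := Nat.le_ceil b
    _ = Real.sqrt (((⌈b⌉₊:ℝ))^2) := (Real.sqrt_sq (by positivity)).symm
    _ ≤ Real.sqrt n := by
      apply Real.sqrt_le_sqrt
      exact_mod_cast hn

private lemma st16_J {a b : ℕ → ℝ} (ha : Tendsto a atTop (nhds 0))
    (hb : Tendsto b atTop atTop) :
    Tendsto (fun n => ∫ x in (a n)..(b n), Real.exp (-2*x^2)) atTop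
      (nhds (Real.sqrt (Real.pi/2)/2)) := by
  have hint : MeasureTheory.Integrable (fun x : ℝ => Real.exp (-2*x^2)) :=
    integrable_exp_neg_mul_sq (by norm_num)
  have h1 : Tendsto (fun n => ∫ x in (0:ℝ)..(b n), Real.exp (-2*x^2)) atTop
      (nhds (∫ x in Set.Ioi (0:ℝ), Real.exp (-2*x^2))) :=
    MeasureTheory.intervalIntegral_tendsto_integral_Ioi 0 hint.integrableOn hb
  have h2 : Tendsto (fun n => ∫ x in (0:ℝ)..(a n), Real.exp (-2*x^2)) atTop (nhds 0) := by
    apply squeeze_zero_norm (a := fun n => |a n|)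
    · intro n
      have := intervalIntegral.norm_integral_le_of_norm_le_const
        (C := 1) (f := fun x : ℝ => Real.exp (-2*x^2)) (a := 0) (b := a n) ?_
      · simpa using this
      · intro x _
        rw [Real.norm_eq_abs, abs_of_pos (Real.exp_pos _), Real.exp_le_one_iff]
        nlinarith [sq_nonneg x]
    · have : Tendsto (fun x : ℝ => |x|) (nhds 0) (nhds |0|) :=
        (continuous_abs.tendsto 0)
      simpa [Function.comp_def] using this.comp ha
  have hgauss : (∫ x in Set.Ioi (0:ℝ), Real.exp (-2*x^2)) = Real.sqrt (Real.pi/2)/2 := by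
    have := integral_gaussian_Ioi 2
    convert this using 2 <;> norm_num
  have h3 := h1.sub h2
  rw [hgauss, sub_zero] at h3
  apply h3.congr
  intro n
  exact intervalIntegral.integral_interval_sub_left
    hint.intervalIntegrable hint.intervalIntegrable

private lemma st16_int_eq {n : ℕ} (hn : 1 ≤ n) (a b : ℝ) :
    ∫ x in a..b, Real.exp (-2*x^2/n)
      = Real.sqrt n * ∫ x in (a/Real.sqrt n)..(b/Real.sqrt n), Real.exp (-2*x^2) := by
  have hs0 : (0:ℝ) < Real.sqrt n := Real.sqrt_pos.2 (by exact_mod_cast hn)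
  have h : ∀ x : ℝ, Real.exp (-2*x^2/n)
      = (fun u : ℝ => Real.exp (-2*u^2)) (x / Real.sqrt n) := by
    intro x
    simp only
    congr 1
    rw [div_pow, Real.sq_sqrt (by positivity : (0:ℝ) ≤ (n:ℝ))]
    ring
  rw [intervalIntegral.integral_congr (g := fun x : ℝ =>
    (fun u : ℝ => Real.exp (-2*u^2)) (x / Real.sqrt n)) (fun x _ => h x)]
  rw [intervalIntegral.integral_comp_div (fun u : ℝ => Real.exp (-2*u^2)) hs0.ne']
  rw [smul_eq_mul]

private lemma st16_G :
    Tendsto (fun n : ℕ =>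
        (∑ k ∈ Finset.Icc 2 (n / 2), Real.exp (-2*(k:ℝ)^2/n)) / Real.sqrt n)
      atTop (nhds (Real.sqrt (Real.pi/8))) := by
  have hval : Real.sqrt (Real.pi/8) = Real.sqrt (Real.pi/2)/2 := by
    rw [show (Real.pi/8 : ℝ) = (Real.pi/2)/2^2 by ring,
      Real.sqrt_div (by positivity) ((2:ℝ)^2),
      Real.sqrt_sq (by norm_num : (0:ℝ) ≤ 2)]
  rw [hval]
  have ha2 : Tendsto (fun n : ℕ => (2:ℝ)/Real.sqrt n) atTop (nhds 0) :=
    Tendsto.div_atTop tendsto_const_nhds st16_sqrt_tendsto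
  have ha1 : Tendsto (fun n : ℕ => (1:ℝ)/Real.sqrt n) atTop (nhds 0) :=
    Tendsto.div_atTop tendsto_const_nhds st16_sqrt_tendsto
  have hsq4 : Tendsto (fun n : ℕ => Real.sqrt n / 4) atTop atTop :=
    st16_sqrt_tendsto.atTop_div_const (by norm_num)
  have hbgen : ∀ c : ℝ, 1 ≤ c →
      Tendsto (fun n : ℕ => (c + ((n/2 - 1 : ℕ):ℝ))/Real.sqrt n) atTop atTop := by
    intro c hc
    apply tendsto_atTop_mono' atTop ?_ hsq4
    filter_upwards [eventually_ge_atTop 4] with n hn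
    have hn0 : (0:ℝ) < n := by
      have : (4:ℝ) ≤ n := by exact_mod_cast hn
      linarith
    have hs0 : (0:ℝ) < Real.sqrt n := Real.sqrt_pos.2 hn0
    have hnat : n ≤ 4*(1 + (n/2 - 1)) := by omega
    have hX : (n:ℝ) ≤ 4*(1 + ((n/2 - 1 : ℕ):ℝ)) := by exact_mod_cast hnat
    have hXc : (n:ℝ) ≤ 4*(c + ((n/2 - 1 : ℕ):ℝ)) := by nlinarith
    rw [div_le_div_iff₀ (by norm_num) hs0, Real.mul_self_sqrt hn0.le]
    linarith
  have hblo := hbgen 2 (by norm_num)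
  have hbhi := hbgen 1 le_rfl
  have hlimlo := st16_J ha2 hblo
  have hlimhi := st16_J ha1 hbhi
  apply tendsto_of_tendsto_of_tendsto_of_le_of_le' hlimlo hlimhi
  · -- lower bound eventually
    filter_upwards [eventually_ge_atTop 6] with n hn
    have hn1 : 1 ≤ n := by omega
    have hn0 : (0:ℝ) < n := by positivity
    have hs0 : (0:ℝ) < Real.sqrt n := Real.sqrt_pos.2 hn0
    have hanti : AntitoneOn (fun x : ℝ => Real.exp (-2*x^2/n))
        (Set.Icc (2:ℝ) (2 + ((n/2 - 1 : ℕ):ℝ))) := by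
      intro x hx y hy hxy
      simp only
      rw [Real.exp_le_exp, show -2*y^2/(n:ℝ) = -(2*y^2/n) from by ring,
        show -2*x^2/(n:ℝ) = -(2*x^2/n) from by ring]
      apply neg_le_neg
      have hx0 : (0:ℝ) ≤ x := le_trans (by norm_num) hx.1
      gcongr <;> nlinarith
    have hint := AntitoneOn.integral_le_sum (x₀ := (2:ℝ)) (a := n/2 - 1) hanti
    have hGsum : (∑ k ∈ Finset.Icc 2 (n/2), Real.exp (-2*(k:ℝ)^2/n))
        = ∑ i ∈ Finset.range (n/2 - 1), Real.exp (-2*(((2+i : ℕ)):ℝ)^2/n) := by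
      rw [← Finset.Ico_add_one_right_eq_Icc, Finset.sum_Ico_eq_sum_range,
        show n/2 + 1 - 2 = n/2 - 1 from by omega]
    have hsame : ∑ i ∈ Finset.range (n/2 - 1), (fun x : ℝ => Real.exp (-2*x^2/n)) (2 + (i:ℕ))
        = ∑ i ∈ Finset.range (n/2 - 1), Real.exp (-2*(((2+i : ℕ)):ℝ)^2/n) := by
      refine Finset.sum_congr rfl fun i _ => ?_
      simp only
      congr 2
      push_cast
      ring
    rw [hsame] at hint
    rw [st16_int_eq hn1 2 (2 + ((n/2 - 1 : ℕ):ℝ))] at hint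
    rw [← hGsum] at hint
    rw [le_div_iff₀ hs0]
    calc (∫ x in ((2:ℝ)/Real.sqrt n)..((2 + ((n/2 - 1 : ℕ):ℝ))/Real.sqrt n),
          Real.exp (-2*x^2)) * Real.sqrt n
        = Real.sqrt n * ∫ x in ((2:ℝ)/Real.sqrt n)..((2 + ((n/2 - 1 : ℕ):ℝ))/Real.sqrt n),
          Real.exp (-2*x^2) := by ring
      _ ≤ _ := hint
  · -- upper bound eventually
    filter_upwards [eventually_ge_atTop 6] with n hn
    have hn1 : 1 ≤ n := by omega
    have hn0 : (0:ℝ) < n := by positivity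
    have hs0 : (0:ℝ) < Real.sqrt n := Real.sqrt_pos.2 hn0
    have hanti : AntitoneOn (fun x : ℝ => Real.exp (-2*x^2/n))
        (Set.Icc (1:ℝ) (1 + ((n/2 - 1 : ℕ):ℝ))) := by
      intro x hx y hy hxy
      simp only
      rw [Real.exp_le_exp, show -2*y^2/(n:ℝ) = -(2*y^2/n) from by ring,
        show -2*x^2/(n:ℝ) = -(2*x^2/n) from by ring]
      apply neg_le_neg
      have hx0 : (0:ℝ) ≤ x := le_trans (by norm_num) hx.1
      gcongr <;> nlinarith
    have hint := AntitoneOn.sum_le_integral (x₀ := (1:ℝ)) (a := n/2 - 1) hanti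
    have hGsum : (∑ k ∈ Finset.Icc 2 (n/2), Real.exp (-2*(k:ℝ)^2/n))
        = ∑ i ∈ Finset.range (n/2 - 1), Real.exp (-2*(((2+i : ℕ)):ℝ)^2/n) := by
      rw [← Finset.Ico_add_one_right_eq_Icc, Finset.sum_Ico_eq_sum_range,
        show n/2 + 1 - 2 = n/2 - 1 from by omega]
    have hsame : ∑ i ∈ Finset.range (n/2 - 1),
        (fun x : ℝ => Real.exp (-2*x^2/n)) (1 + ((i + 1 : ℕ):ℝ))
        = ∑ i ∈ Finset.range (n/2 - 1), Real.exp (-2*(((2+i : ℕ)):ℝ)^2/n) := by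
      refine Finset.sum_congr rfl fun i _ => ?_
      simp only
      congr 2
      push_cast
      ring
    rw [hsame] at hint
    rw [st16_int_eq hn1 1 (1 + ((n/2 - 1 : ℕ):ℝ))] at hint
    rw [← hGsum] at hint
    rw [div_le_iff₀ hs0]
    calc (∑ k ∈ Finset.Icc 2 (n/2), Real.exp (-2*(k:ℝ)^2/n))
        ≤ Real.sqrt n * ∫ x in ((1:ℝ)/Real.sqrt n)..((1 + ((n/2 - 1 : ℕ):ℝ))/Real.sqrt n),
          Real.exp (-2*x^2) := hint
      _ = (∫ x in ((1:ℝ)/Real.sqrt n)..((1 + ((n/2 - 1 : ℕ):ℝ))/Real.sqrt n),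
          Real.exp (-2*x^2)) * Real.sqrt n := by ring



open Filter in
/-- With `Q_n = ∑_{k=2}^{⌊n/2⌋} n!/((n-2k)!·n^{2k})`, one has
`Q_n ~ √(π/8)·√n` as `n → ∞`. -/
theorem stmt16 :
    Tendsto
      (fun n : ℕ =>
        (∑ k ∈ Finset.Icc 2 (n / 2),
            (n.factorial : ℝ) / (((n - 2 * k).factorial : ℝ) * (n : ℝ) ^ (2 * k))) /
          Real.sqrt n)
      atTop (nhds (Real.sqrt (Real.pi / 8))) := by
  have hdiff : Tendsto (fun n : ℕ =>
      (∑ k ∈ Finset.Icc 2 (n / 2),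
          ((n.factorial : ℝ) / (((n - 2*k).factorial : ℝ) * (n:ℝ)^(2*k))
            - Real.exp (-2*(k:ℝ)^2/n))) / Real.sqrt n) atTop (nhds 0) := by
    apply squeeze_zero_norm' (a := fun n : ℕ => 4000 / Real.sqrt n)
    · filter_upwards [eventually_ge_atTop 16] with n hn
      have hn0 : (0:ℝ) < n := by positivity
      have hs0 : (0:ℝ) < Real.sqrt n := Real.sqrt_pos.2 hn0
      rw [Real.norm_eq_abs, abs_div, abs_of_pos hs0]
      exact div_le_div_of_nonneg_right (st16_err hn) hs0.le
    · exact Tendsto.div_atTop tendsto_const_nhds st16_sqrt_tendsto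
  have hG := st16_G
  have hsum := hG.add hdiff
  rw [add_zero] at hsum
  apply hsum.congr
  intro n
  rw [← add_div, ← Finset.sum_add_distrib]
  congr 1
  refine Finset.sum_congr rfl fun k _ => ?_
  ring
end
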